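/- arXiv:0711.1516 — 12 statements merged into one kernel-verified Lean document; each statement's English description precedes it below -/
import Mathlib

section
/- Let (X,d) be a metrizable space. Then X has the Hurewicz property if and only if for every metric d' on X generating the topology of X, the metric space (X,d') is σ-totally bounded. -/
/-- A topological space `X` has the Hurewicz property if for each sequence of open covers
`U n` of `X` there is a sequence `V n` such that each `V n` is a finite subset of `U n` and
every point of `X` belongs to `⋃₀ V n` for all but finitely many `n`. -/
def HurewiczProperty (X : Type*) [TopologicalSpace X] : Prop :=
  ∀ U : ℕ → Set (Set X),
    (∀ n, (∀ S ∈ U n, IsOpen S) ∧ ⋃₀ U n = Set.univ) →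
    ∃ V : ℕ → Set (Set X),
      (∀ n, (V n).Finite ∧ V n ⊆ U n) ∧
      ∀ x : X, ∀ᶠ n in Filter.atTop, x ∈ ⋃₀ V n

open Set Metric Filter Topology

section Aux

variable {X : Type*} [MetricSpace X]

/-- Forward direction: a Hurewicz metric space is σ-totally bounded. -/
theorem hurewicz_forward_aux (h : HurewiczProperty X) :
    ∃ S : ℕ → Set X, (∀ n, TotallyBounded (S n)) ∧ (⋃ n, S n) = Set.univ := by
  rcases isEmpty_or_nonempty X with hX | hX
  · exact ⟨fun _ => ∅, fun _ => totallyBounded_empty,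
      Set.eq_univ_of_forall fun x => (IsEmpty.false x).elim⟩
  set U : ℕ → Set (Set X) := fun n => Set.range (fun x : X => Metric.ball x (1 / (n + 1))) with hUdef
  have hpos : ∀ n : ℕ, (0 : ℝ) < 1 / (n + 1) := by
    intro n; positivity
  obtain ⟨V, hV, hVx⟩ := h U (by
    intro n
    constructor
    · rintro S ⟨c, rfl⟩; exact isOpen_ball
    · apply Set.eq_univ_of_forall
      intro x
      exact ⟨Metric.ball x (1 / (n + 1)), ⟨x, rfl⟩, mem_ball_self (hpos n)⟩)
  refine ⟨fun n => {x : X | ∀ m, n ≤ m → x ∈ ⋃₀ V m}, ?_, ?_⟩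
  · intro n
    rw [Metric.totallyBounded_iff]
    intro ε hε
    obtain ⟨m₁, hm₁⟩ := exists_nat_one_div_lt hε
    set m := max m₁ n with hm
    have hmε : (1 : ℝ) / (m + 1) < ε := by
      have h1 : (m₁ : ℝ) + 1 ≤ (m : ℝ) + 1 := by
        have : m₁ ≤ m := le_max_left _ _
        exact_mod_cast Nat.succ_le_succ this
      exact lt_of_le_of_lt (one_div_le_one_div_of_le (by positivity) h1) hm₁
    have hkey : ∀ W ∈ V m, ∃ c : X, W ⊆ Metric.ball c ε := by
      intro W hW
      obtain ⟨c, rfl⟩ := (hV m).2 hW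
      exact ⟨c, Metric.ball_subset_ball hmε.le⟩
    choose! f hf using hkey
    refine ⟨f '' V m, (hV m).1.image f, ?_⟩
    intro x hx
    obtain ⟨W, hWV, hxW⟩ := hx m (le_max_right _ _)
    exact Set.mem_biUnion (Set.mem_image_of_mem f hWV) (hf W hWV hxW)
  · apply Set.eq_univ_of_forall
    intro x
    obtain ⟨N, hN⟩ := Filter.eventually_atTop.mp (hVx x)
    exact Set.mem_iUnion.mpr ⟨N, fun m hm => hN m hm⟩

open Classical in
/-- Auxiliary function: distance-like gauge to the complement of a set. -/
noncomputable def rhoF (W : Set X) (x : X) : ℝ :=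
  if W = Set.univ then 1 else min 1 (Metric.infDist x Wᶜ)

theorem rhoF_eq_of_univ {W : Set X} (h : W = Set.univ) :
    rhoF (X := X) W = fun _ => (1 : ℝ) :=
  funext fun _ => if_pos h

theorem rhoF_eq_of_ne {W : Set X} (h : W ≠ Set.univ) :
    rhoF (X := X) W = fun x => min 1 (Metric.infDist x Wᶜ) :=
  funext fun _ => if_neg h

theorem rhoF_nonneg (W : Set X) (x : X) : 0 ≤ rhoF W x := by
  by_cases h : W = Set.univ
  · rw [rhoF_eq_of_univ h]; norm_num
  · rw [rhoF_eq_of_ne h]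
    exact le_min zero_le_one Metric.infDist_nonneg

theorem rhoF_le_one (W : Set X) (x : X) : rhoF W x ≤ 1 := by
  by_cases h : W = Set.univ
  · rw [rhoF_eq_of_univ h]
  · rw [rhoF_eq_of_ne h]
    exact min_le_left _ _

theorem rhoF_lipschitz (W : Set X) : LipschitzWith 1 (rhoF W) := by
  by_cases h : W = Set.univ
  · rw [rhoF_eq_of_univ h]
    exact (LipschitzWith.const (1 : ℝ)).weaken zero_le_one
  · rw [rhoF_eq_of_ne h]
    exact (Metric.lipschitz_infDist_pt Wᶜ).const_min 1

/-- The gauge of a cover. -/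
noncomputable def rhoC (U : Set (Set X)) (x : X) : ℝ :=
  ⨆ W : U, rhoF (W : Set X) x

theorem rhoC_bddAbove (U : Set (Set X)) (x : X) :
    BddAbove (Set.range fun W : U => rhoF (W : Set X) x) := by
  refine ⟨1, ?_⟩
  rintro _ ⟨W, rfl⟩
  exact rhoF_le_one _ _

theorem rhoC_lipschitz (U : Set (Set X)) : LipschitzWith 1 (rhoC U) := by
  rw [lipschitzWith_iff_dist_le_mul]
  have key : ∀ x y : X, rhoC U x - rhoC U y ≤ dist x y := by
    intro x y
    rcases isEmpty_or_nonempty U with hU | hU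
    · simp [rhoC, Real.iSup_of_isEmpty, dist_nonneg]
    · have : rhoC U x ≤ rhoC U y + dist x y := by
        refine ciSup_le fun W => ?_
        have h2 := lipschitzWith_iff_dist_le_mul.mp (rhoF_lipschitz (W : Set X)) x y
        rw [NNReal.coe_one, one_mul, Real.dist_eq] at h2
        have h3 : rhoF (W : Set X) x - rhoF (W : Set X) y ≤ dist x y :=
          (le_abs_self _).trans h2
        have h4 : rhoF (W : Set X) y ≤ rhoC U y := le_ciSup (rhoC_bddAbove U y) W
        linarith
      linarith
  intro x y
  rw [NNReal.coe_one, one_mul, Real.dist_eq, abs_sub_le_iff]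
  exact ⟨key x y, by simpa [dist_comm] using key y x⟩

theorem rhoC_pos {U : Set (Set X)} (hopen : ∀ S ∈ U, IsOpen S) (hcov : ⋃₀ U = Set.univ)
    (x : X) : 0 < rhoC U x := by
  have hx : x ∈ ⋃₀ U := hcov ▸ Set.mem_univ x
  obtain ⟨W, hWU, hxW⟩ := hx
  have hpos : 0 < rhoF W x := by
    by_cases h : W = Set.univ
    · rw [rhoF_eq_of_univ h]; norm_num
    · rw [rhoF_eq_of_ne h]
      refine lt_min one_pos ?_
      rw [← (hopen W hWU).isClosed_compl.notMem_iff_infDist_pos (Set.nonempty_compl.mpr h)]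
      simpa using hxW
  exact hpos.trans_le (le_ciSup (rhoC_bddAbove U x) ⟨W, hWU⟩)

theorem exists_ball_subset_of_le_rhoC {U : Set (Set X)} {δ : ℝ} {x : X}
    (hδ : 0 < δ) (h : δ ≤ rhoC U x) : ∃ W ∈ U, Metric.ball x (δ / 2) ⊆ W := by
  have h2 : δ / 2 < rhoC U x := lt_of_lt_of_le (half_lt_self hδ) h
  haveI : Nonempty U := by
    by_contra hne
    rw [not_nonempty_iff] at hne
    have : rhoC U x = 0 := Real.iSup_of_isEmpty _
    rw [this] at h2
    linarith
  obtain ⟨⟨W, hWU⟩, hW⟩ := exists_lt_of_lt_ciSup h2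
  refine ⟨W, hWU, ?_⟩
  by_cases hw : W = Set.univ
  · simp [hw]
  · rw [rhoF_eq_of_ne hw] at hW
    simp only at hW
    intro y hy
    by_contra hyW
    have : Metric.infDist x Wᶜ ≤ dist x y := Metric.infDist_le_dist_of_mem hyW
    rw [Metric.mem_ball, dist_comm] at hy
    have := lt_min_iff.mp hW
    linarith

theorem cover_of_totallyBounded {U : Set (Set X)} {S : Set X} {δ : ℝ} (hδ : 0 < δ)
    (hTB : TotallyBounded S) (hlow : ∀ x ∈ S, δ ≤ rhoC U x) :
    ∃ V : Set (Set X), V.Finite ∧ V ⊆ U ∧ S ⊆ ⋃₀ V := by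
  obtain ⟨t, htf, hts⟩ := Metric.totallyBounded_iff.mp hTB (δ / 4) (by positivity)
  have key : ∀ y : X, ∃ W : Set X,
      (Metric.ball y (δ / 4) ∩ S).Nonempty → W ∈ U ∧ Metric.ball y (δ / 4) ⊆ W := by
    intro y
    by_cases hne : (Metric.ball y (δ / 4) ∩ S).Nonempty
    · obtain ⟨x, hxb, hxS⟩ := hne
      obtain ⟨W, hWU, hWb⟩ := exists_ball_subset_of_le_rhoC hδ (hlow x hxS)
      refine ⟨W, fun _ => ⟨hWU, fun z hz => hWb ?_⟩⟩
      rw [Metric.mem_ball] at hz hxb ⊢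
      calc dist z x ≤ dist z y + dist y x := dist_triangle _ _ _
        _ < δ / 4 + δ / 4 := by rw [dist_comm y x]; exact add_lt_add hz hxb
        _ = δ / 2 := by ring
    · exact ⟨∅, fun h => absurd h hne⟩
  choose W hW using key
  refine ⟨W '' {y ∈ t | (Metric.ball y (δ / 4) ∩ S).Nonempty},
    (htf.subset (Set.sep_subset _ _)).image _, ?_, ?_⟩
  · rintro _ ⟨y, ⟨_, hyne⟩, rfl⟩
    exact (hW y hyne).1
  · intro x hxS
    obtain ⟨y, hyt, hxy⟩ := Set.mem_iUnion₂.mp (hts hxS)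
    have hne : (Metric.ball y (δ / 4) ∩ S).Nonempty := ⟨x, hxy, hxS⟩
    exact ⟨W y, Set.mem_image_of_mem W ⟨hyt, hne⟩, (hW y hne).2 hxy⟩

end Aux

section Backward

variable {X : Type*} [m₀ : MetricSpace X]

theorem hurewicz_backward_aux
    (H : ∀ m : MetricSpace X,
        m.toPseudoMetricSpace.toUniformSpace.toTopologicalSpace =
          m₀.toPseudoMetricSpace.toUniformSpace.toTopologicalSpace →
        ∃ S : ℕ → Set X,
          (∀ n, @TotallyBounded X m.toPseudoMetricSpace.toUniformSpace (S n)) ∧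
          (⋃ n, S n) = Set.univ) :
    HurewiczProperty X := by
  classical
  intro U hU
  rcases isEmpty_or_nonempty X with hX | hX
  · exact ⟨fun _ => ∅, fun n => ⟨Set.finite_empty, Set.empty_subset _⟩,
      fun x => (IsEmpty.false x).elim⟩
  -- the gauge functions
  set g : ℕ → X → ℝ := fun n x => (rhoC (U n) x)⁻¹ with hg
  have hrpos : ∀ n (x : X), 0 < rhoC (U n) x := fun n x => rhoC_pos (hU n).1 (hU n).2 x
  have hgc : ∀ n, Continuous (g n) := fun n =>
    ((rhoC_lipschitz (U n)).continuous).inv₀ fun x => (hrpos n x).ne'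
  have hgpos : ∀ n (x : X), 0 < g n x := fun n x => inv_pos.mpr (hrpos n x)
  -- the embedding
  letI mPi : MetricSpace (ℕ → ℝ) := PiCountable.metricSpace
  set Φ : X → X × (ℕ → ℝ) := fun x => (x, fun n => g n x) with hΦ
  have hΦc : Continuous Φ := continuous_id.prodMk (continuous_pi fun n => hgc n)
  have hΦe : Topology.IsEmbedding Φ := by
    refine ⟨IsInducing.of_comp hΦc continuous_fst ?_, ?_⟩
    · have : (Prod.fst ∘ Φ) = id := rfl
      rw [this]; exact IsInducing.id
    · intro a b hab
      exact congrArg Prod.fst hab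
  obtain ⟨S, hSTB, hSU⟩ := H (hΦe.comapMetricSpace Φ) rfl
  have hΦu : @UniformContinuous X (X × (ℕ → ℝ))
      (Topology.IsEmbedding.comapMetricSpace Φ hΦe).toPseudoMetricSpace.toUniformSpace
      inferInstance Φ := by
    exact tendsto_comap
  -- each S k is totally bounded in the original metric and g n is bounded on each S k
  have hTB0 : ∀ k, TotallyBounded (S k) := by
    intro k
    have h1 := (@TotallyBounded.image X (X × (ℕ → ℝ))
      (Topology.IsEmbedding.comapMetricSpace Φ hΦe).toPseudoMetricSpace.toUniformSpace
      inferInstance Φ (S k) (hSTB k) hΦu).image uniformContinuous_fst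
    have h2 : Prod.fst '' (Φ '' S k) = S k := by
      rw [Set.image_image]
      simp [hΦ]
    rwa [h2] at h1
  have hbdd : ∀ n k, ∃ C : ℝ, ∀ x ∈ S k, g n x ≤ C := by
    intro n k
    have h1 := (@TotallyBounded.image X (X × (ℕ → ℝ))
      (Topology.IsEmbedding.comapMetricSpace Φ hΦe).toPseudoMetricSpace.toUniformSpace
      inferInstance Φ (S k) (hSTB k) hΦu).image
      ((Pi.uniformContinuous_proj (fun _ : ℕ => ℝ) n).comp uniformContinuous_snd)
    obtain ⟨C, hC⟩ := h1.isBounded.bddAbove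
    refine ⟨C, fun x hx => hC ?_⟩
    exact ⟨Φ x, Set.mem_image_of_mem _ hx, rfl⟩
  -- construct the finite subcovers
  have claim : ∀ n k, ∃ V : Set (Set X), V.Finite ∧ V ⊆ U n ∧ S k ⊆ ⋃₀ V := by
    intro n k
    rcases (S k).eq_empty_or_nonempty with h | ⟨x₀, hx₀⟩
    · exact ⟨∅, Set.finite_empty, Set.empty_subset _, by simp [h]⟩
    · obtain ⟨C, hC'⟩ := hbdd n k
      have hCpos : 0 < C := lt_of_lt_of_le (hgpos n x₀) (hC' x₀ hx₀)
      refine cover_of_totallyBounded (inv_pos.mpr hCpos) (hTB0 k) ?_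
      intro x hx
      have h1 : g n x ≤ C := hC' x hx
      have h2 : C⁻¹ ≤ (g n x)⁻¹ := inv_anti₀ (hgpos n x) h1
      have h3 : (g n x)⁻¹ = rhoC (U n) x := by
        simp only [hg]
        exact inv_inv _
      rw [h3] at h2
      exact h2
  choose W hWf hWU hWS using claim
  refine ⟨fun n => ⋃ k ∈ Finset.range (n + 1), W n k, fun n => ⟨?_, ?_⟩, ?_⟩
  · exact Set.Finite.biUnion (Finset.range (n + 1)).finite_toSet fun k _ => hWf n k
  · exact Set.iUnion₂_subset fun k _ => hWU n k
  · intro x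
    have hx : x ∈ ⋃ n, S n := hSU ▸ Set.mem_univ x
    obtain ⟨k, hk⟩ := Set.mem_iUnion.mp hx
    filter_upwards [Filter.eventually_ge_atTop k] with n hn
    obtain ⟨Wk, hW1, hW2⟩ := hWS n k hk
    exact ⟨Wk, Set.mem_iUnion₂.mpr ⟨k, Finset.mem_range.mpr (Nat.lt_succ_of_le hn), hW1⟩, hW2⟩

end Backward

/-- A metrizable space has the Hurewicz property if and only if it is σ-totally bounded in
every metric generating its topology. -/
theorem hurewicz_iff_sigmaTotallyBounded_all_metrics
    {X : Type*} [t : TopologicalSpace X] [TopologicalSpace.MetrizableSpace X] :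
    HurewiczProperty X ↔
      ∀ m : MetricSpace X,
        m.toPseudoMetricSpace.toUniformSpace.toTopologicalSpace = t →
        ∃ S : ℕ → Set X,
          (∀ n, @TotallyBounded X m.toPseudoMetricSpace.toUniformSpace (S n)) ∧
          (⋃ n, S n) = Set.univ := by
  obtain ⟨m₀, hm₀⟩ : ∃ m : MetricSpace X, m.toPseudoMetricSpace.toUniformSpace.toTopologicalSpace = t :=
    ⟨TopologicalSpace.metrizableSpaceMetric X, rfl⟩
  subst hm₀
  constructor
  · intro h m hm
    rw [← hm] at h
    exact @hurewicz_forward_aux X m h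
  · intro H
    exact hurewicz_backward_aux H
end

section
/- If a metric space (X,d) has the Hurewicz property, then (X,d) is σ-totally bounded; in fact X is a countable increasing union of subsets each of which is totally bounded with respect to d. -/
/-- If a metric space has the Hurewicz property, then it is a countable increasing union of
totally bounded subsets; in particular it is σ-totally bounded. -/
theorem sigmaTotallyBounded_of_hurewicz {X : Type*} [MetricSpace X]
    (h : HurewiczProperty X) :
    ∃ S : ℕ → Set X, Monotone S ∧ (∀ n, TotallyBounded (S n)) ∧ (⋃ n, S n) = Set.univ := by
  set U : ℕ → Set (Set X) := fun n => {s | ∃ c : X, s = Metric.ball c (1 / (n + 1))} with hU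
  have hcov : ∀ n, (∀ S ∈ U n, IsOpen S) ∧ ⋃₀ U n = Set.univ := by
    intro n
    constructor
    · rintro S ⟨c, rfl⟩; exact Metric.isOpen_ball
    · ext x
      simp only [Set.mem_sUnion, Set.mem_univ, iff_true]
      exact ⟨Metric.ball x (1 / (n + 1)), ⟨x, rfl⟩,
        Metric.mem_ball_self (by positivity)⟩
  obtain ⟨V, hV, hVx⟩ := h U hcov
  refine ⟨fun n => {x | ∀ m, n ≤ m → x ∈ ⋃₀ V m}, ?_, ?_, ?_⟩
  · intro a b hab x hx m hm
    exact hx m (le_trans hab hm)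
  · intro n
    rw [Metric.totallyBounded_iff]
    intro ε hε
    obtain ⟨m, hm⟩ := exists_nat_gt (1 / ε)
    have hm1 : (1 : ℝ) / (m + 1) < ε := by
      rw [div_lt_iff₀ (by positivity)]
      rw [div_lt_iff₀ hε] at hm
      nlinarith
    -- choose centers of balls in V (max n m)
    set k := max n m with hk
    have hfin := (hV k).1
    have hsub := (hV k).2
    -- each element of V k is a ball of radius 1/(k+1)
    have hcenter : ∀ s ∈ V k, ∃ c : X, s = Metric.ball c (1 / (k + 1)) := fun s hs => hsub hs
    choose c hc using hcenter
    classical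
    refine ⟨Set.image (fun s : {s // s ∈ V k} => c s.1 s.2) Set.univ, ?_, ?_⟩
    · have := hfin.to_subtype
      exact Set.Finite.image _ Set.finite_univ
    · intro x hx
      obtain ⟨s, hs, hxs⟩ := hx k (le_max_left n m)
      refine Set.mem_iUnion₂.mpr ⟨c s hs, Set.mem_image_of_mem _ (Set.mem_univ (⟨s, hs⟩ : {s // s ∈ V k})), ?_⟩
      have : x ∈ Metric.ball (c s hs) (1 / (k + 1)) := by rw [← hc s hs]; exact hxs
      refine Metric.mem_ball.mpr (lt_of_lt_of_le (Metric.mem_ball.mp this) ?_)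
      have : (1 : ℝ) / (k + 1) ≤ 1 / (m + 1) := by
        apply one_div_le_one_div_of_le (by positivity)
        have : (m : ℝ) ≤ k := by exact_mod_cast le_max_right n m
        linarith
      linarith
  · ext x
    simp only [Set.mem_iUnion, Set.mem_univ, iff_true]
    obtain ⟨N, hN⟩ := Filter.eventually_atTop.mp (hVx x)
    exact ⟨N, fun m hm => hN m hm⟩
end

section
/- Let X be a metrizable space. If for every metric d' on X generating the topology of X the metric space (X,d') is σ-totally bounded, then X has the Hurewicz property. -/
open Set Filter Topology

private lemma min1_tri {a b c : ℝ} (hb : 0 ≤ b) (hc : 0 ≤ c) (h : a ≤ b + c) :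
    min 1 a ≤ min 1 b + min 1 c := by
  rcases le_or_gt 1 b with h1 | h1
  · have h3 : min 1 a ≤ min 1 b := by
      rw [min_eq_left h1]; exact min_le_left _ _
    have h2 : (0:ℝ) ≤ min 1 c := le_min zero_le_one hc
    linarith
  · rcases le_or_gt 1 c with h2 | h2
    · have h3 : min 1 a ≤ min 1 c := by rw [min_eq_left h2]; exact min_le_left _ _
      have h4 : (0:ℝ) ≤ min 1 b := le_min zero_le_one hb
      linarith
    · rw [min_eq_right h1.le, min_eq_right h2.le]
      exact le_trans (min_le_right _ _) h

private lemma exists_majorant {X : Type*} [TopologicalSpace X] [NormalSpace X]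
    [ParacompactSpace X] (W : ℕ → Set X) (hWo : ∀ m, IsOpen (W m))
    (hWu : ⋃ m, W m = Set.univ) :
    ∃ h : X → ℝ, Continuous h ∧ ∀ (x : X) (M : ℕ), h x ≤ M → ∃ m ≤ M, x ∈ W m := by
  obtain ⟨f, hf⟩ := PartitionOfUnity.exists_isSubordinate isClosed_univ W hWo (by rw [hWu])
  refine ⟨fun x => ∑ᶠ m, f m x • (m : ℝ),
    f.continuous_finsum_smul (fun i x _ => continuousAt_const), ?_⟩
  intro x M hxM
  classical
  have hex : ∃ m, x ∈ W m := by
    have hx : x ∈ ⋃ m, W m := hWu ▸ Set.mem_univ x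
    exact Set.mem_iUnion.1 hx
  refine ⟨Nat.find hex, ?_, Nat.find_spec hex⟩
  have hfin : {m | f m x ≠ 0}.Finite := by
    have := f.locallyFinite.point_finite x
    simpa [Function.mem_support] using this
  set F := hfin.toFinset with hF
  have hsub1 : (Function.support fun m => f m x • (m : ℝ)) ⊆ ↑F := by
    intro m hm
    simp only [hF, Set.Finite.coe_toFinset, Set.mem_setOf_eq]
    intro h0
    apply hm
    simp [Function.mem_support, h0]
  have hsub2 : (Function.support fun m => f m x) ⊆ ↑F := by
    intro m hm
    simp only [hF, Set.Finite.coe_toFinset, Set.mem_setOf_eq]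
    simpa [Function.mem_support] using hm
  have h1 : ∑ᶠ m, f m x • (m : ℝ) = ∑ m ∈ F, f m x • (m : ℝ) :=
    finsum_eq_sum_of_support_subset _ hsub1
  have h2 : ∑ᶠ m, f m x = ∑ m ∈ F, f m x :=
    finsum_eq_sum_of_support_subset _ hsub2
  rw [f.sum_eq_one (Set.mem_univ x)] at h2
  have key : ((Nat.find hex : ℕ) : ℝ) ≤ ∑ m ∈ F, f m x • (m : ℝ) := by
    calc ((Nat.find hex : ℕ) : ℝ) = ∑ m ∈ F, f m x * (Nat.find hex : ℝ) := by
          rw [← Finset.sum_mul, ← h2, one_mul]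
    _ ≤ ∑ m ∈ F, f m x • (m : ℝ) := by
        apply Finset.sum_le_sum
        intro m hm
        rcases eq_or_ne (f m x) 0 with h0 | h0
        · simp [h0]
        · have hxW : x ∈ W m := hf m (subset_closure (by simpa [Function.mem_support] using h0))
          have hgm : (Nat.find hex : ℕ) ≤ m := Nat.find_min' hex hxW
          have : ((Nat.find hex : ℕ) : ℝ) ≤ (m : ℝ) := by exact_mod_cast hgm
          simpa [smul_eq_mul] using mul_le_mul_of_nonneg_left this (f.nonneg m x)
  rw [← h1] at key
  exact_mod_cast key.trans hxM

private lemma bound_on_totallyBounded {X : Type*} [MetricSpace X] (hfn : X → ℝ) {c : ℝ}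
    (hc : 0 < c) (hd : ∀ x y : X, c * min 1 |hfn x - hfn y| ≤ dist x y)
    {T : Set X} (hT : TotallyBounded T) : ∃ M : ℕ, ∀ x ∈ T, hfn x ≤ M := by
  obtain ⟨t, htf, htsub⟩ := Metric.totallyBounded_iff.1 hT (c / 2) (by positivity)
  obtain ⟨C, hC⟩ := (htf.image hfn).bddAbove
  refine ⟨⌈C + 1⌉₊, fun x hx => ?_⟩
  obtain ⟨y, hyt, hxy⟩ := Set.mem_iUnion₂.1 (htsub hx)
  have h1 : c * min 1 |hfn x - hfn y| ≤ dist x y := hd x y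
  have h2 : dist x y < c / 2 := Metric.mem_ball.1 hxy
  have h3 : min 1 |hfn x - hfn y| < 1 / 2 := by nlinarith
  have h4 : |hfn x - hfn y| < 1 / 2 := by
    rcases le_or_gt 1 |hfn x - hfn y| with hg | hg
    · rw [min_eq_left hg] at h3; norm_num at h3
    · rwa [min_eq_right hg.le] at h3
  have h5 : hfn y ≤ C := hC (Set.mem_image_of_mem hfn hyt)
  have h6 : hfn x - hfn y ≤ |hfn x - hfn y| := le_abs_self _
  have h7 : (C + 1 : ℝ) ≤ ⌈C + 1⌉₊ := Nat.le_ceil _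
  linarith

private lemma exists_metric {X : Type*} [m₀ : MetricSpace X] (hfn : ℕ → X → ℝ)
    (hfc : ∀ n, Continuous (hfn n)) :
    ∃ m' : MetricSpace X,
      m'.toPseudoMetricSpace.toUniformSpace.toTopologicalSpace
        = m₀.toPseudoMetricSpace.toUniformSpace.toTopologicalSpace ∧
      ∀ (n : ℕ) (x y : X),
        (1/2:ℝ)^n * min 1 |hfn n x - hfn n y|
          ≤ @Dist.dist X m'.toPseudoMetricSpace.toDist x y := by
  set D : ℕ → X → X → ℝ := fun n x y => min 1 |hfn n x - hfn n y| with hD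
  have hD0 : ∀ n (x y : X), 0 ≤ D n x y := fun n x y => le_min zero_le_one (abs_nonneg _)
  have hD1 : ∀ n (x y : X), D n x y ≤ 1 := fun n x y => min_le_left _ _
  set d' : X → X → ℝ := fun x y => min 1 (dist x y) + ∑' n, (1/2:ℝ)^n * D n x y with hd'
  have hsummable : ∀ x y : X, Summable (fun n => (1/2:ℝ)^n * D n x y) := by
    intro x y
    apply Summable.of_nonneg_of_le (fun n => mul_nonneg (by positivity) (hD0 n x y))
      (fun n => ?_) summable_geometric_two
    calc (1/2:ℝ)^n * D n x y ≤ (1/2:ℝ)^n * 1 := by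
          apply mul_le_mul_of_nonneg_left (hD1 n x y) (by positivity)
    _ = (1/2:ℝ)^n := mul_one _
  have htsum_nonneg : ∀ x y : X, 0 ≤ ∑' n, (1/2:ℝ)^n * D n x y := fun x y =>
    tsum_nonneg fun n => mul_nonneg (by positivity) (hD0 n x y)
  have hmin1_nonneg : ∀ x y : X, (0:ℝ) ≤ min 1 (dist x y) := fun x y =>
    le_min zero_le_one dist_nonneg
  have hself : ∀ x : X, d' x x = 0 := by
    intro x
    have hz : ∀ n : ℕ, (1/2:ℝ)^n * D n x x = 0 := by
      intro n; simp [hD]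
    have hz' : ∑' n : ℕ, (1/2:ℝ)^n * D n x x = 0 := by
      rw [tsum_congr hz, tsum_zero]
    simp only [hd', dist_self, hz', add_zero]
    exact min_eq_right zero_le_one
  have hcomm : ∀ x y : X, d' x y = d' y x := by
    intro x y
    have : ∀ n : ℕ, D n x y = D n y x := by intro n; simp [hD, abs_sub_comm]
    simp [hd', dist_comm, this]
  have htri : ∀ x y z : X, d' x z ≤ d' x y + d' y z := by
    intro x y z
    have h1 : min 1 (dist x z) ≤ min 1 (dist x y) + min 1 (dist y z) :=
      min1_tri dist_nonneg dist_nonneg (dist_triangle x y z)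
    have h2 : ∑' n, (1/2:ℝ)^n * D n x z
        ≤ ∑' n, ((1/2:ℝ)^n * D n x y + (1/2:ℝ)^n * D n y z) := by
      apply Summable.tsum_le_tsum _ (hsummable x z) ((hsummable x y).add (hsummable y z))
      intro n
      have hDt : D n x z ≤ D n x y + D n y z :=
        min1_tri (abs_nonneg _) (abs_nonneg _) (abs_sub_le _ _ _)
      have hp : (0:ℝ) ≤ (1/2:ℝ)^n := by positivity
      nlinarith
    rw [Summable.tsum_add (hsummable x y) (hsummable y z)] at h2
    simp only [hd']
    linarith
  have heq : ∀ x y : X, d' x y = 0 → x = y := by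
    intro x y hxy
    have h1 := htsum_nonneg x y
    have h2 := hmin1_nonneg x y
    have h3 : min 1 (dist x y) = 0 := by
      simp only [hd'] at hxy; linarith
    have h4 : dist x y = 0 := by
      rcases le_or_gt 1 (dist x y) with hge | hlt
      · rw [min_eq_left hge] at h3; norm_num at h3
      · rwa [min_eq_right hlt.le] at h3
    exact eq_of_dist_eq_zero h4
  have hcont : ∀ x : X, Continuous fun y => d' x y := by
    intro x
    simp only [hd']
    apply Continuous.add
    · exact continuous_const.min (Continuous.dist continuous_const continuous_id)
    · apply continuous_tsum (u := fun n => (1/2:ℝ)^n) (fun n => ?_) summable_geometric_two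
        (fun n y => ?_)
      · exact continuous_const.mul
          (continuous_const.min (Continuous.abs (continuous_const.sub (hfc n))))
      · rw [Real.norm_eq_abs, abs_of_nonneg (mul_nonneg (by positivity) (hD0 n x y))]
        calc (1/2:ℝ)^n * D n x y ≤ (1/2:ℝ)^n * 1 :=
              mul_le_mul_of_nonneg_left (hD1 n x y) (by positivity)
        _ = (1/2:ℝ)^n := mul_one _
  have hH : ∀ s : Set X, IsOpen s ↔ ∀ x ∈ s, ∃ ε > 0, ∀ y, d' x y < ε → y ∈ s := by
    intro s
    constructor
    · intro hs x hx
      obtain ⟨ε, hε, hball⟩ := Metric.isOpen_iff.1 hs x hx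
      refine ⟨min ε 1, lt_min hε one_pos, fun y hy => ?_⟩
      apply hball
      rw [Metric.mem_ball, dist_comm]
      have h1 : min 1 (dist x y) ≤ d' x y := by
        have := htsum_nonneg x y
        simp only [hd']; linarith
      have h2 : min 1 (dist x y) < min ε 1 := lt_of_le_of_lt h1 hy
      have h3 : dist x y < 1 := by
        by_contra hcon
        push_neg at hcon
        rw [min_eq_left hcon] at h2
        exact absurd h2 (not_lt.2 (min_le_right ε 1))
      rw [min_eq_right h3.le] at h2
      exact lt_of_lt_of_le h2 (min_le_left ε 1)
    · intro hs
      rw [isOpen_iff_mem_nhds]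
      intro x hx
      obtain ⟨ε, hε, hsubs⟩ := hs x hx
      have hopen : IsOpen {y | d' x y < ε} := isOpen_lt (hcont x) continuous_const
      have hxmem : x ∈ {y | d' x y < ε} := by
        simp only [Set.mem_setOf_eq, hself x]; exact hε
      exact Filter.mem_of_superset (hopen.mem_nhds hxmem) hsubs
  refine ⟨MetricSpace.ofDistTopology d' hself hcomm htri hH heq, rfl, fun n x y => ?_⟩
  show (1/2:ℝ)^n * D n x y ≤ d' x y
  have h1 : (1/2:ℝ)^n * D n x y ≤ ∑' k, (1/2:ℝ)^k * D k x y :=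
    Summable.le_tsum (hsummable x y) n (fun k _ => mul_nonneg (by positivity) (hD0 k x y))
  have h2 := hmin1_nonneg x y
  simp only [hd']
  linarith

private theorem aux_main {X : Type*} [m₀ : MetricSpace X]
    (h : ∀ m : MetricSpace X,
      m.toPseudoMetricSpace.toUniformSpace.toTopologicalSpace
        = m₀.toPseudoMetricSpace.toUniformSpace.toTopologicalSpace →
      ∃ S : ℕ → Set X,
        (∀ n, @TotallyBounded X m.toPseudoMetricSpace.toUniformSpace (S n)) ∧
        (⋃ n, S n) = Set.univ) :
    HurewiczProperty X := by
  intro U hU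
  rcases isEmpty_or_nonempty X with hX | hX
  · exact ⟨fun _ => ∅, fun n => ⟨Set.finite_empty, Set.empty_subset _⟩, fun x => isEmptyElim x⟩
  -- X is separable, hence second countable
  obtain ⟨S₀, hS₀tb, hS₀u⟩ := h m₀ rfl
  have hsep : TopologicalSpace.SeparableSpace X := by
    rw [← TopologicalSpace.isSeparable_univ_iff, ← hS₀u]
    exact TopologicalSpace.IsSeparable.iUnion (fun n => (hS₀tb n).isSeparable)
  have hsc : SecondCountableTopology X := UniformSpace.secondCountable_of_separable X
  -- countable subcovers
  have hcs : ∀ n, ∃ e : ℕ → Set X, (∀ k, e k ∈ U n) ∧ ⋃ k, e k = Set.univ := by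
    intro n
    obtain ⟨T, hTc, hTsub, hTu⟩ := TopologicalSpace.isOpen_sUnion_countable (U n) (hU n).1
    have hTu' : ⋃₀ T = Set.univ := by rw [hTu, (hU n).2]
    have hTne : T.Nonempty := by
      rcases Set.eq_empty_or_nonempty T with rfl | hne
      · rw [Set.sUnion_empty] at hTu'
        exact absurd hTu' (Set.empty_ne_univ)
      · exact hne
    obtain ⟨e, he⟩ := hTc.exists_eq_range hTne
    refine ⟨e, fun k => hTsub (by rw [he]; exact Set.mem_range_self k), ?_⟩
    rw [← Set.sUnion_range, ← he, hTu']
  choose e he1 he2 using hcs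
  -- continuous majorants
  have hmaj : ∀ n, ∃ hn : X → ℝ, Continuous hn ∧
      ∀ (x : X) (M : ℕ), hn x ≤ M → ∃ m ≤ M, x ∈ e n m :=
    fun n => exists_majorant (e n) (fun m => (hU n).1 _ (he1 n m)) (he2 n)
  choose hfn hfc hfkey using hmaj
  -- the tailored metric
  obtain ⟨m', hm'top, hm'low⟩ := exists_metric hfn hfc
  obtain ⟨S, hStb, hSu⟩ := h m' hm'top
  -- bounds on each finite union
  have hbd : ∀ n : ℕ, ∃ M : ℕ, ∀ x ∈ ⋃ i ∈ Set.Iic n, S i, hfn n x ≤ M := by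
    intro n
    have htb : @TotallyBounded X m'.toPseudoMetricSpace.toUniformSpace
        (⋃ i ∈ Set.Iic n, S i) :=
      (@totallyBounded_biUnion X m'.toPseudoMetricSpace.toUniformSpace ℕ (Set.Iic n)
        (Set.finite_Iic n) S).2 (fun i _ => hStb i)
    exact @bound_on_totallyBounded X m' (hfn n) ((1/2:ℝ)^n) (by positivity) (hm'low n) _ htb
  choose M hM using hbd
  refine ⟨fun n => e n '' Set.Iic (M n), fun n =>
    ⟨(Set.finite_Iic (M n)).image _, ?_⟩, ?_⟩
  · rintro s ⟨k, _, rfl⟩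
    exact he1 n k
  · intro x
    have hx : x ∈ ⋃ n, S n := hSu ▸ Set.mem_univ x
    obtain ⟨k, hk⟩ := Set.mem_iUnion.1 hx
    rw [Filter.eventually_atTop]
    refine ⟨k, fun n hn => ?_⟩
    have hxT : x ∈ ⋃ i ∈ Set.Iic n, S i :=
      Set.mem_biUnion (Set.mem_Iic.2 hn) hk
    obtain ⟨m, hmM, hxm⟩ := hfkey n x (M n) (hM n x hxT)
    exact ⟨e n m, Set.mem_image_of_mem _ hmM, hxm⟩

/-- If a metrizable space is σ-totally bounded in every metric generating its topology, then
it has the Hurewicz property. -/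
theorem hurewicz_of_sigmaTotallyBounded_all_metrics
    {X : Type*} [t : TopologicalSpace X] [TopologicalSpace.MetrizableSpace X]
    (h : ∀ m : MetricSpace X,
      m.toPseudoMetricSpace.toUniformSpace.toTopologicalSpace = t →
      ∃ S : ℕ → Set X,
        (∀ n, @TotallyBounded X m.toPseudoMetricSpace.toUniformSpace (S n)) ∧
        (⋃ n, S n) = Set.univ) :
    HurewiczProperty X := by
  letI m₀ : MetricSpace X := TopologicalSpace.metrizableSpaceMetric X
  exact aux_main (fun m hm => h m hm)
end

section
/- Let X be a metrizable space. If X has property S_c(O_fin,O) and the Hurewicz property, then X has property S_c^+(O_fin,O). -/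
/-- Property `S_c(O_fin,O)`: for each sequence of finite open covers `U n` of `X` there is a
sequence `V n` of pairwise disjoint families of open sets, `V n` refining `U n`, whose union
is a cover of `X`. -/
def ScOFinO (X : Type*) [TopologicalSpace X] : Prop :=
  ∀ U : ℕ → Set (Set X),
    (∀ n, (U n).Finite ∧ (∀ S ∈ U n, IsOpen S) ∧ ⋃₀ U n = Set.univ) →
    ∃ V : ℕ → Set (Set X),
      (∀ n, (∀ S ∈ V n, IsOpen S) ∧ (V n).Pairwise Disjoint ∧
        ∀ S ∈ V n, ∃ T ∈ U n, S ⊆ T) ∧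
      ⋃₀ (⋃ n, V n) = Set.univ

/-- Property `S_c^+(O_fin,O)`: for each sequence of finite open covers `U n` of `X` there are
a sequence `W n` of finite pairwise disjoint families of open sets with `W n` refining `U n`,
and a strictly increasing sequence `m` of positive integers, such that for each `x ∈ X`, for
all but finitely many `k` there is `j` with `m k ≤ j < m (k+1)` and `x ∈ ⋃₀ W j`. -/
def ScPlusOFinO (X : Type*) [TopologicalSpace X] : Prop :=
  ∀ U : ℕ → Set (Set X),
    (∀ n, (U n).Finite ∧ (∀ S ∈ U n, IsOpen S) ∧ ⋃₀ U n = Set.univ) →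
    ∃ (W : ℕ → Set (Set X)) (m : ℕ → ℕ),
      StrictMono m ∧ 0 < m 0 ∧
      (∀ n, (W n).Finite ∧ (∀ S ∈ W n, IsOpen S) ∧ (W n).Pairwise Disjoint ∧
        ∀ S ∈ W n, ∃ T ∈ U n, S ⊆ T) ∧
      ∀ x : X, ∀ᶠ k in Filter.atTop, ∃ j, m k ≤ j ∧ j < m (k + 1) ∧ x ∈ ⋃₀ W j

private lemma enc_inj : ∀ k i k' i' : ℕ, 2^k * (2*i+1) = 2^k' * (2*i'+1) → k = k' ∧ i = i' := by
  intro k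
  induction k with
  | zero =>
    intro i k' i' h
    cases k' with
    | zero => simp at h; omega
    | succ k' =>
      exfalso
      rw [pow_succ', mul_assoc] at h
      simp at h
      omega
  | succ k ih =>
    intro i k' i' h
    cases k' with
    | zero =>
      exfalso
      rw [pow_succ', mul_assoc] at h
      simp at h
      omega
    | succ k' =>
      rw [pow_succ', pow_succ', mul_assoc, mul_assoc] at h
      have h' := Nat.eq_of_mul_eq_mul_left (by norm_num) h
      have := ih i k' i' h'
      exact ⟨by omega, this.2⟩


/-- If a metrizable space has `S_c(O_fin,O)` and the Hurewicz property, then it has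
`S_c^+(O_fin,O)`. -/
theorem scPlusOFinO_of_scOFinO_of_hurewicz
    {X : Type*} [TopologicalSpace X] [TopologicalSpace.MetrizableSpace X]
    (hsc : ScOFinO X) (hH : HurewiczProperty X) :
    ScPlusOFinO X := by
  intro U hU
  choose V hV1 hVcov using fun k => hsc (fun i => U (2^k * (2*i+1))) (fun i => hU _)
  obtain ⟨F, hF, hFx⟩ := hH (fun k => ⋃ i, V k i) (by
    intro k
    refine ⟨fun S hS => ?_, hVcov k⟩
    obtain ⟨i, hi⟩ := Set.mem_iUnion.mp hS
    exact (hV1 k i).1 S hi)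
  have hidx0 : ∀ k S, ∃ i, S ∈ F k → S ∈ V k i := by
    intro k S
    by_cases h : S ∈ F k
    · obtain ⟨i, hi⟩ := Set.mem_iUnion.mp ((hF k).2 h)
      exact ⟨i, fun _ => hi⟩
    · exact ⟨0, fun h' => absurd h' h⟩
  choose idx hidx using hidx0
  let W : ℕ → Set (Set X) := fun n => {S | ∃ k, S ∈ F k ∧ 2^k * (2 * idx k S + 1) = n}
  let Mf : ℕ → ℕ := fun k => ((hF k).1.toFinset).sup fun S => 2^k * (2 * idx k S + 1)
  let m : ℕ → ℕ := fun t => Nat.rec 1 (fun _ mt => max (Mf mt) mt + 1) t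
  have hmsucc : ∀ t, m (t + 1) = max (Mf (m t)) (m t) + 1 := fun t => rfl
  have hsm : StrictMono m := by
    apply strictMono_nat_of_lt_succ
    intro t
    rw [hmsucc t]
    have := le_max_right (Mf (m t)) (m t)
    omega
  refine ⟨W, m, hsm, Nat.one_pos, fun n => ⟨?_, ?_, ?_, ?_⟩, ?_⟩
  · -- finiteness
    apply Set.Finite.subset (Set.Finite.biUnion (Set.finite_Iio (n+1)) fun k _ => (hF k).1)
    rintro S ⟨k, hSF, hkn⟩
    have h1 : 2^k ≤ n := hkn ▸ Nat.le_mul_of_pos_right _ (by omega)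
    have h2 : k < 2^k := Nat.lt_two_pow_self (n := k)
    exact Set.mem_biUnion (show k ∈ Set.Iio (n+1) by simp; omega) hSF
  · -- open
    rintro S ⟨k, hSF, -⟩
    exact (hV1 k (idx k S)).1 S (hidx k S hSF)
  · -- pairwise disjoint
    rintro S ⟨k, hSF, hkn⟩ T ⟨k', hTF, hk'n⟩ hne
    obtain ⟨hkk, hii⟩ := enc_inj k (idx k S) k' (idx k' T) (hkn.trans hk'n.symm)
    subst hkk
    refine (hV1 k (idx k S)).2.1 (hidx k S hSF) ?_ hne
    rw [hii]
    exact hidx k T hTF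
  · -- refinement
    rintro S ⟨k, hSF, hkn⟩
    have := (hV1 k (idx k S)).2.2 S (hidx k S hSF)
    rwa [hkn] at this
  · -- covering / grouping
    intro x
    obtain ⟨K, hK⟩ := Filter.eventually_atTop.mp (hFx x)
    rw [Filter.eventually_atTop]
    refine ⟨K, fun t ht => ?_⟩
    have hxF : x ∈ ⋃₀ F (m t) := hK (m t) (le_trans ht hsm.le_apply)
    obtain ⟨S, hSF, hxS⟩ := hxF
    refine ⟨2^(m t) * (2 * idx (m t) S + 1), ?_, ?_, S, ⟨m t, hSF, rfl⟩, hxS⟩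
    · calc m t ≤ 2^(m t) := (Nat.lt_two_pow_self (n := m t)).le
        _ ≤ _ := Nat.le_mul_of_pos_right _ (by omega)
    · rw [hmsucc t]
      have hle : 2^(m t) * (2 * idx (m t) S + 1) ≤ Mf (m t) :=
        Finset.le_sup (f := fun S => 2^(m t) * (2 * idx (m t) S + 1)) ((hF (m t)).1.mem_toFinset.mpr hSF)
      have := le_max_left (Mf (m t)) (m t)
      omega
end

section
/- If (X,d) is a σ-totally bounded metric space which has property S_c^+(O_fin,O), then X has the Haver property with respect to the metric d. -/
/-- The Haver property of a metric space `(X,d)`: for each sequence of positive reals `ε n`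
there is a sequence `V n` of pairwise disjoint families of open sets, each of `d`-diameter
less than `ε n`, whose union is a cover of `X`. -/
def HaverProperty (X : Type*) [MetricSpace X] : Prop :=
  ∀ ε : ℕ → ℝ, (∀ n, 0 < ε n) →
    ∃ V : ℕ → Set (Set X),
      (∀ n, (∀ S ∈ V n, IsOpen S ∧ EMetric.diam S < ENNReal.ofReal (ε n)) ∧
        (V n).Pairwise Disjoint) ∧
      ⋃₀ (⋃ n, V n) = Set.univ

/-- If a σ-totally bounded metric space has `S_c^+(O_fin,O)`, then it has the Haver property
with respect to its metric. -/
theorem haver_of_sigmaTotallyBounded_of_scPlus {X : Type*} [MetricSpace X]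
    (htb : ∃ S : ℕ → Set X, (∀ n, TotallyBounded (S n)) ∧ (⋃ n, S n) = Set.univ)
    (hsc : ScPlusOFinO X) :
    HaverProperty X := by
  intro ε hε
  obtain ⟨S, hStb, hSu⟩ := htb
  -- totally bounded "cumulative" sets
  set C : ℕ → Set X := fun n => closure (⋃ i ∈ Set.Iic n, S i) with hC
  have hCtb : ∀ n, TotallyBounded (C n) := fun n =>
    (totallyBounded_biUnion (Set.finite_Iic n)).2 (fun i _ => hStb i) |>.closure
  -- finite nets
  have hnet : ∀ n, ∃ t : Set X, t.Finite ∧ C n ⊆ ⋃ y ∈ t, Metric.ball y (ε n / 3) := by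
    intro n
    exact (Metric.totallyBounded_iff.1 (hCtb n)) (ε n / 3) (by linarith [hε n])
  choose t ht hcov using hnet
  set U : ℕ → Set (Set X) := fun n =>
    ((fun y => Metric.ball y (ε n / 3)) '' t n) ∪ {(C n)ᶜ} with hU
  have hUcov : ∀ n, (U n).Finite ∧ (∀ T ∈ U n, IsOpen T) ∧ ⋃₀ U n = Set.univ := by
    intro n
    refine ⟨((ht n).image _).union (Set.finite_singleton _), ?_, ?_⟩
    · rintro T (⟨y, _, rfl⟩ | rfl)
      · exact Metric.isOpen_ball
      · exact isClosed_closure.isOpen_compl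
    · apply Set.eq_univ_of_forall
      intro x
      by_cases hx : x ∈ C n
      · obtain ⟨_, ⟨y, rfl⟩, _, ⟨hy, rfl⟩, hxy⟩ := hcov n hx
        exact ⟨Metric.ball y (ε n / 3), Or.inl ⟨y, hy, rfl⟩, hxy⟩
      · exact ⟨(C n)ᶜ, Or.inr rfl, hx⟩
  obtain ⟨W, m, hm, _, hW, hWcov⟩ := hsc U hUcov
  refine ⟨fun n => {A ∈ W n | ∃ y ∈ t n, A ⊆ Metric.ball y (ε n / 3)}, ?_, ?_⟩
  · intro n
    refine ⟨?_, (hW n).2.2.1.mono (Set.sep_subset _ _)⟩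
    rintro A ⟨hAW, y, _, hAy⟩
    refine ⟨(hW n).2.1 A hAW, ?_⟩
    calc EMetric.diam A ≤ EMetric.diam (Metric.ball y (ε n / 3)) := EMetric.diam_mono hAy
      _ ≤ 2 * ENNReal.ofReal (ε n / 3) := by
          rw [← Metric.emetric_ball]; exact EMetric.diam_ball
      _ < ENNReal.ofReal (ε n) := by
          rw [show (2 : ENNReal) = ENNReal.ofReal 2 by simp, ← ENNReal.ofReal_mul (by norm_num)]
          exact ENNReal.ofReal_lt_ofReal_iff (hε n) |>.2 (by linarith [hε n])
  · apply Set.eq_univ_of_forall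
    intro x
    obtain ⟨_, ⟨N, rfl⟩, hxN⟩ := hSu ▸ Set.mem_univ x
    obtain ⟨k, hk⟩ := ((hWcov x).and (Filter.eventually_ge_atTop N)).exists
    obtain ⟨⟨j, hjk, _, A, hAW, hxA⟩, hkN⟩ := hk
    have hjN : N ≤ j := le_trans (le_trans hkN (hm.le_apply)) hjk
    have hxC : x ∈ C j := subset_closure (Set.mem_biUnion hjN hxN)
    obtain ⟨T, hTU, hAT⟩ := (hW j).2.2.2 A hAW
    rcases hTU with ⟨y, hy, rfl⟩ | rfl
    · exact ⟨A, Set.mem_iUnion.2 ⟨j, hAW, y, hy, hAT⟩, hxA⟩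
    · exact absurd hxC (hAT hxA)
end

section
/- Let X be a metrizable space with the Hurewicz property. Then X has property S_c(O,O) if and only if X has property S_c(O_fin,O). -/
/-- Property `S_c(O,O)`: for each sequence of open covers `U n` of `X` there is a sequence
`V n` of pairwise disjoint families of open sets, `V n` refining `U n`, whose union is a
cover of `X`. -/
def ScOO (X : Type*) [TopologicalSpace X] : Prop :=
  ∀ U : ℕ → Set (Set X),
    (∀ n, (∀ S ∈ U n, IsOpen S) ∧ ⋃₀ U n = Set.univ) →
    ∃ V : ℕ → Set (Set X),
      (∀ n, (∀ S ∈ V n, IsOpen S) ∧ (V n).Pairwise Disjoint ∧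
        ∀ S ∈ V n, ∃ T ∈ U n, S ⊆ T) ∧
      ⋃₀ (⋃ n, V n) = Set.univ

/-- In a metrizable space with the Hurewicz property, `S_c(O,O)` and `S_c(O_fin,O)` are
equivalent. -/
theorem scOO_iff_scOFinO_of_hurewicz
    {X : Type*} [TopologicalSpace X] [TopologicalSpace.MetrizableSpace X]
    (hH : HurewiczProperty X) :
    ScOO X ↔ ScOFinO X := by
  constructor
  · intro h U hU
    exact h U fun n => ⟨(hU n).2.1, (hU n).2.2⟩
  · intro hSc U hU
    classical
    letI : MetricSpace X := TopologicalSpace.metrizableSpaceMetric X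
    -- refined covers whose members have closure inside a member of U m
    set U' : ℕ → Set (Set X) := fun m => {O | IsOpen O ∧ ∃ T ∈ U m, closure O ⊆ T} with hU'def
    have hU' : ∀ m, (∀ S ∈ U' m, IsOpen S) ∧ ⋃₀ U' m = Set.univ := by
      intro m
      refine ⟨fun S hS => hS.1, ?_⟩
      ext x
      simp only [Set.mem_univ, iff_true, Set.mem_sUnion]
      have hx : x ∈ ⋃₀ U m := (hU m).2 ▸ Set.mem_univ x
      obtain ⟨T, hTU, hxT⟩ := hx
      have hTn : T ∈ nhds x := ((hU m).1 T hTU).mem_nhds hxT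
      obtain ⟨s, hs, hsc, hst⟩ := exists_mem_nhds_isClosed_subset hTn
      exact ⟨interior s, ⟨isOpen_interior, T, hTU,
        (closure_minimal interior_subset hsc).trans hst⟩, mem_interior_iff_mem_nhds.2 hs⟩
    obtain ⟨H, hHfin, hHcov⟩ := hH U' hU'
    -- choose, for each member S of H m, a member of U m containing closure S
    have hgex : ∀ m, ∀ S : Set X, ∃ T : Set X, S ∈ H m → T ∈ U m ∧ closure S ⊆ T := by
      intro m S
      by_cases hS : S ∈ H m
      · obtain ⟨T, hT1, hT2⟩ := ((hHfin m).2 hS).2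
        exact ⟨T, fun _ => ⟨hT1, hT2⟩⟩
      · exact ⟨∅, fun h => absurd h hS⟩
    choose g hg using hgex
    -- the closed sets K k
    set K : ℕ → Set X := fun k => ⋂ m, ⋂ (_ : k ≤ m), closure (⋃₀ H m) with hKdef
    have hKclosed : ∀ k, IsClosed (K k) := fun k =>
      isClosed_iInter fun m => isClosed_iInter fun _ => isClosed_closure
    have hKF : ∀ k m, k ≤ m → K k ⊆ ⋃₀ (g m '' H m) := by
      intro k m hkm x hx
      have hx1 : x ∈ closure (⋃₀ H m) := Set.mem_iInter₂.1 hx m hkm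
      have hcl : closure (⋃₀ H m) ⊆ ⋃ S ∈ H m, closure S := by
        refine closure_minimal ?_ ((hHfin m).1.isClosed_biUnion fun _ _ => isClosed_closure)
        rintro y ⟨S, hS, hyS⟩
        exact Set.mem_biUnion hS (subset_closure hyS)
      obtain ⟨S, hS⟩ := Set.mem_iUnion.1 (hcl hx1)
      obtain ⟨hSH, hyS⟩ := Set.mem_iUnion.1 hS
      exact ⟨g m S, Set.mem_image_of_mem _ hSH, (hg m S hSH).2 hyS⟩
    have hKcov : ∀ x : X, ∃ k, x ∈ K k := by
      intro x
      obtain ⟨N, hN⟩ := Filter.eventually_atTop.1 (hHcov x)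
      exact ⟨N, Set.mem_iInter₂.2 fun m hm => subset_closure (hN m hm)⟩
    -- the finite open covers for run k
    set C : ℕ → ℕ → Set (Set X) :=
      fun k j => insert (K k)ᶜ (g (Nat.pair k j) '' H (Nat.pair k j)) with hCdef
    have hC : ∀ k, ∀ j, (C k j).Finite ∧ (∀ S ∈ C k j, IsOpen S) ∧ ⋃₀ C k j = Set.univ := by
      intro k j
      refine ⟨((hHfin (Nat.pair k j)).1.image _).insert _, ?_, ?_⟩
      · rintro S (rfl | ⟨S', hS', rfl⟩)
        · exact (hKclosed k).isOpen_compl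
        · exact (hU (Nat.pair k j)).1 _ (hg _ S' hS').1
      · ext x
        simp only [Set.mem_univ, iff_true, Set.mem_sUnion]
        by_cases hx : x ∈ K k
        · obtain ⟨T, hT1, hT2⟩ := hKF k (Nat.pair k j) (Nat.left_le_pair k j) hx
          exact ⟨T, Set.mem_insert_of_mem _ hT1, hT2⟩
        · exact ⟨(K k)ᶜ, Set.mem_insert _ _, hx⟩
    have hrun : ∀ k, ∃ W : ℕ → Set (Set X),
        (∀ j, (∀ S ∈ W j, IsOpen S) ∧ (W j).Pairwise Disjoint ∧
          ∀ S ∈ W j, ∃ T ∈ C k j, S ⊆ T) ∧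
        ⋃₀ (⋃ j, W j) = Set.univ := fun k => hSc (C k) (hC k)
    choose W hW1 hW2 using hrun
    refine ⟨fun m => {S | S ∈ W m.unpair.1 m.unpair.2 ∧ ∃ T ∈ U m, S ⊆ T}, ?_, ?_⟩
    · intro m
      refine ⟨fun S hS => (hW1 m.unpair.1 m.unpair.2).1 S hS.1,
        ((hW1 m.unpair.1 m.unpair.2).2.1).mono (Set.sep_subset _ _),
        fun S hS => hS.2⟩
    · ext x
      simp only [Set.mem_univ, iff_true, Set.mem_sUnion, Set.mem_iUnion]
      obtain ⟨k, hk⟩ := hKcov x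
      have hx2 : x ∈ ⋃₀ (⋃ j, W k j) := (hW2 k).symm ▸ Set.mem_univ x
      obtain ⟨S, hS, hxS⟩ := hx2
      obtain ⟨j, hSW⟩ := Set.mem_iUnion.1 hS
      obtain ⟨T, hTC, hST⟩ := (hW1 k j).2.2 S hSW
      rcases hTC with rfl | hTF
      · exact absurd hk (hST hxS)
      · obtain ⟨S', hS', rfl⟩ := hTF
        refine ⟨S, ⟨Nat.pair k j, ?_⟩, hxS⟩
        have hup : (Nat.pair k j).unpair = (k, j) := Nat.unpair_pair k j
        exact ⟨by rw [hup]; exact hSW, g (Nat.pair k j) S', (hg _ S' hS').1, hST⟩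
end

section
/- If a metrizable space X has the Hurewicz property and property S_c(O_fin,O), then for every metric d on X generating the topology of X, (X,d) has the Haver property with respect to d. -/
set_option maxHeartbeats 4000000 in
/-- If a metrizable space has the Hurewicz property and `S_c(O_fin,O)`, then it has the Haver
property with respect to every metric generating its topology. -/
theorem haver_all_metrics_of_hurewicz_of_scOFinO
    {X : Type*} [t : TopologicalSpace X] [TopologicalSpace.MetrizableSpace X]
    (hH : HurewiczProperty X) (hsc : ScOFinO X) :
    ∀ m : MetricSpace X,
      m.toPseudoMetricSpace.toUniformSpace.toTopologicalSpace = t →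
      @HaverProperty X m := by
  intro m hm
  subst hm
  intro ε hε
  classical
  rcases isEmpty_or_nonempty X with hX | hX
  · refine ⟨fun _ => ∅, fun n => ⟨by simp, by simp [Set.Pairwise]⟩, ?_⟩
    apply Set.eq_univ_of_forall
    intro x
    exact (hX.false x).elim
  set r : ℕ → ℝ := fun n => 1 / (n + 1) with hr_def
  have hr : ∀ n, 0 < r n := fun n => by positivity
  obtain ⟨V, hV, hVcov⟩ := hH (fun n => {S | ∃ x, S = Metric.ball x (r n)}) (by
    intro n
    constructor
    · rintro S ⟨x, rfl⟩; exact Metric.isOpen_ball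
    · apply Set.eq_univ_of_forall
      intro x
      exact ⟨Metric.ball x (r n), ⟨x, rfl⟩, Metric.mem_ball_self (hr n)⟩)
  have hcen : ∀ n, ∀ S ∈ V n, ∃ y, S = Metric.ball y (r n) := fun n S hS => (hV n).2 hS
  choose! c hc using hcen
  set K : ℕ → Set X :=
    fun k => ⋂ n, ⋂ (_ : k ≤ n), ⋃ S ∈ V n, Metric.closedBall (c n S) (r n) with hK_def
  have hKclosed : ∀ k, IsClosed (K k) := by
    intro k
    apply isClosed_iInter; intro n; apply isClosed_iInter; intro _
    exact (hV n).1.isClosed_biUnion (fun S _ => Metric.isClosed_closedBall)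
  have hKcov : ∀ x : X, ∃ k, x ∈ K k := by
    intro x
    obtain ⟨N, hN⟩ := Filter.eventually_atTop.mp (hVcov x)
    refine ⟨N, ?_⟩
    simp only [hK_def, Set.mem_iInter]
    intro n hn
    obtain ⟨S, hS, hxS⟩ := hN n hn
    refine Set.mem_biUnion hS ?_
    rw [hc n S hS] at hxS
    exact Metric.ball_subset_closedBall hxS
  have hnf : ∀ k j : ℕ, ∃ n, k ≤ n ∧ r n < ε (Nat.pair k j) / 3 := by
    intro k j
    obtain ⟨N, hN⟩ := exists_nat_one_div_lt
      (show (0:ℝ) < ε (Nat.pair k j) / 3 by have := hε (Nat.pair k j); linarith)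
    refine ⟨max k N, le_max_left _ _, lt_of_le_of_lt ?_ hN⟩
    apply one_div_le_one_div_of_le (by positivity)
    have : (N:ℝ) ≤ (max k N : ℕ) := Nat.cast_le.mpr (le_max_right _ _)
    linarith
  choose nf hnf1 hnf2 using hnf
  set Balls : ℕ → ℕ → Set (Set X) := fun k j =>
    (fun S => Metric.ball (c (nf k j) S) (ε (Nat.pair k j) / 3)) '' (V (nf k j)) with hB_def
  set C : ℕ → ℕ → Set (Set X) := fun k j => Balls k j ∪ {(K k)ᶜ} with hC_def
  have hCprop : ∀ k j, (C k j).Finite ∧ (∀ S ∈ C k j, IsOpen S) ∧ ⋃₀ C k j = Set.univ := by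
    intro k j
    refine ⟨((hV (nf k j)).1.image _).union (Set.finite_singleton _), ?_, ?_⟩
    · rintro S (⟨S₀, hS₀, rfl⟩ | hS)
      · exact Metric.isOpen_ball
      · rw [Set.mem_singleton_iff] at hS
        rw [hS]
        exact (hKclosed k).isOpen_compl
    · apply Set.eq_univ_of_forall
      intro x
      by_cases hx : x ∈ K k
      · have hx' : x ∈ ⋃ S ∈ V (nf k j), Metric.closedBall (c (nf k j) S) (r (nf k j)) := by
          have := Set.mem_iInter.mp hx (nf k j)
          exact Set.mem_iInter.mp this (hnf1 k j)
        obtain ⟨S, hS, hxS⟩ := Set.mem_iUnion₂.mp hx'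
        refine ⟨Metric.ball (c (nf k j) S) (ε (Nat.pair k j) / 3),
          Set.mem_union_left _ ⟨S, hS, rfl⟩, ?_⟩
        have : dist x (c (nf k j) S) ≤ r (nf k j) := Metric.mem_closedBall.mp hxS
        exact Metric.mem_ball.mpr (lt_of_le_of_lt this (hnf2 k j))
      · exact ⟨(K k)ᶜ, Set.mem_union_right _ rfl, hx⟩
  have hDex : ∀ k, ∃ D : ℕ → Set (Set X),
      (∀ j, (∀ S ∈ D j, IsOpen S) ∧ (D j).Pairwise Disjoint ∧
        ∀ S ∈ D j, ∃ T ∈ C k j, S ⊆ T) ∧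
      ⋃₀ (⋃ j, D j) = Set.univ := fun k => hsc (fun j => C k j) (fun j => hCprop k j)
  choose D hD1 hD2 using hDex
  refine ⟨fun n => {S ∈ D n.unpair.1 n.unpair.2 | ∃ T ∈ Balls n.unpair.1 n.unpair.2, S ⊆ T},
    ?_, ?_⟩
  · intro n
    constructor
    · rintro S ⟨hSD, T, hTB, hST⟩
      refine ⟨(hD1 n.unpair.1 n.unpair.2).1 S hSD, ?_⟩
      obtain ⟨S₀, hS₀, rfl⟩ := hTB
      have h1 : EMetric.diam S ≤ 2 * ENNReal.ofReal (ε (Nat.pair n.unpair.1 n.unpair.2) / 3) := by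
        refine le_trans (EMetric.diam_mono hST) ?_
        simp only [← Metric.emetric_ball]
        exact EMetric.diam_ball
      rw [Nat.pair_unpair] at h1
      refine lt_of_le_of_lt h1 ?_
      rw [show (2 : ENNReal) = ENNReal.ofReal 2 by simp, ← ENNReal.ofReal_mul (by norm_num)]
      exact (ENNReal.ofReal_lt_ofReal_iff (hε n)).mpr (by have := hε n; linarith)
    · exact ((hD1 n.unpair.1 n.unpair.2).2.1).mono (Set.sep_subset _ _)
  · apply Set.eq_univ_of_forall
    intro x
    obtain ⟨k, hxK⟩ := hKcov x
    have hx : x ∈ ⋃₀ (⋃ j, D k j) := by rw [hD2 k]; trivial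
    obtain ⟨S, hS, hxS⟩ := hx
    obtain ⟨j, hSj⟩ := Set.mem_iUnion.mp hS
    obtain ⟨T, hTC, hST⟩ := (hD1 k j).2.2 S hSj
    rcases hTC with hTB | hT
    · refine ⟨S, Set.mem_iUnion.mpr ⟨Nat.pair k j, ?_⟩, hxS⟩
      simp only [Set.mem_setOf_eq, Nat.unpair_pair]
      exact ⟨hSj, T, hTB, hST⟩
    · rw [Set.mem_singleton_iff] at hT
      subst hT
      exact absurd hxK (hST hxS)
end

section
/- Let X be a separable metrizable space which has an F_σ subset C such that C (with the subspace topology) has the Hurewicz property, and for every open set U ⊆ X with C ⊆ U the set X\U is finite dimensional. Then X has property S_c(O,O) if and only if X has property S_c(O_fin,O). -/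
/-- A space `Y` is finite dimensional (has finite covering dimension) if there is `n` such
that every finite open cover of `Y` has a finite open refinement covering `Y` in which each
point of `Y` belongs to at most `n + 1` of the sets. -/
def FiniteCoveringDimension (Y : Type*) [TopologicalSpace Y] : Prop :=
  ∃ n : ℕ, ∀ U : Set (Set Y), U.Finite → (∀ S ∈ U, IsOpen S) → ⋃₀ U = Set.univ →
    ∃ V : Set (Set Y), V.Finite ∧ (∀ S ∈ V, IsOpen S) ∧ (∀ S ∈ V, ∃ T ∈ U, S ⊆ T) ∧
      ⋃₀ V = Set.univ ∧ ∀ y : Y, {S ∈ V | y ∈ S}.ncard ≤ n + 1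


open Set Metric

universe u


lemma lemE {α : Type*} [MetricSpace α] (Z : Set α)
    (𝒮 : Set (Set ↥Z)) (hop : ∀ S ∈ 𝒮, IsOpen S) (hdisj : 𝒮.Pairwise Disjoint) :
    ∃ L : Set ↥Z → Set α, (∀ S ∈ 𝒮, IsOpen (L S)) ∧ (∀ S ∈ 𝒮, Subtype.val '' S ⊆ L S) ∧
      (∀ S ∈ 𝒮, ∀ T ∈ 𝒮, S ≠ T → Disjoint (L S) (L T)) := by
  classical
  set A : Set ↥Z → Set α := fun S => Z \ (Subtype.val '' S) with hA
  set rad : Set ↥Z → ↥Z → ℝ := fun S x =>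
    if A S = ∅ then 1 else Metric.infDist (x : α) (A S) / 2 with hrad
  have hradpos : ∀ S ∈ 𝒮, ∀ x ∈ S, 0 < rad S x := by
    intro S hS x hx
    by_cases h : A S = ∅
    · simp [hrad, h]
    · simp only [hrad, if_neg h]
      have hne : (A S).Nonempty := Set.nonempty_iff_ne_empty.2 h
      obtain ⟨ε, hε, hball⟩ := Metric.isOpen_iff.1 (hop S hS) x hx
      have hle : ε ≤ Metric.infDist (x : α) (A S) := by
        by_contra hlt
        push_neg at hlt
        obtain ⟨z, hz, hdz⟩ := (Metric.infDist_lt_iff hne).1 hlt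
        have hzZ : z ∈ Z := hz.1
        have hmem : (⟨z, hzZ⟩ : ↥Z) ∈ S := by
          apply hball
          rw [Metric.mem_ball, Subtype.dist_eq]
          simpa [dist_comm] using hdz
        exact hz.2 ⟨⟨z, hzZ⟩, hmem, rfl⟩
      linarith
  refine ⟨fun S => ⋃ x ∈ S, Metric.ball (x : α) (rad S x), ?_, ?_, ?_⟩
  · intro S hS; exact isOpen_biUnion fun _ _ => Metric.isOpen_ball
  · rintro S hS _ ⟨x, hx, rfl⟩
    exact Set.mem_biUnion hx (Metric.mem_ball_self (hradpos S hS x hx))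
  · intro S hS T hT hne
    rw [Set.disjoint_left]
    rintro a haS haT
    simp only [Set.mem_iUnion] at haS haT
    obtain ⟨x, hx, hax⟩ := haS
    obtain ⟨y, hy, hay⟩ := haT
    have hST : Disjoint S T := hdisj hS hT hne
    have hyAS : (y : α) ∈ A S := by
      refine ⟨y.2, ?_⟩
      rintro ⟨y', hy'S, hyy'⟩
      have he : y' = y := Subtype.ext hyy'
      subst he
      exact (Set.disjoint_left.1 hST hy'S) hy
    have hxAT : (x : α) ∈ A T := by
      refine ⟨x.2, ?_⟩
      rintro ⟨x', hx'T, hxx'⟩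
      have he : x' = x := Subtype.ext hxx'
      subst he
      exact (Set.disjoint_left.1 hST hx) hx'T
    have hASne : (A S).Nonempty := ⟨_, hyAS⟩
    have hATne : (A T).Nonempty := ⟨_, hxAT⟩
    have hrS : rad S x = Metric.infDist (x : α) (A S) / 2 := by
      simp [hrad, Set.nonempty_iff_ne_empty.1 hASne]
    have hrT : rad T y = Metric.infDist (y : α) (A T) / 2 := by
      simp [hrad, Set.nonempty_iff_ne_empty.1 hATne]
    have h1 : dist a (x : α) < Metric.infDist (x : α) (A S) / 2 := by
      rw [← hrS]; exact Metric.mem_ball.1 hax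
    have h2 : dist a (y : α) < Metric.infDist (y : α) (A T) / 2 := by
      rw [← hrT]; exact Metric.mem_ball.1 hay
    have htri : dist (x : α) (y : α) ≤ dist (x : α) a + dist a (y : α) := dist_triangle _ _ _
    have hdS : Metric.infDist (x : α) (A S) ≤ dist (x : α) (y : α) :=
      Metric.infDist_le_dist_of_mem hyAS
    have hdT : Metric.infDist (y : α) (A T) ≤ dist (y : α) (x : α) :=
      Metric.infDist_le_dist_of_mem hxAT
    rw [dist_comm] at hdT
    rw [dist_comm a (x : α)] at h1
    rcases le_total (Metric.infDist (x : α) (A S)) (Metric.infDist (y : α) (A T)) with h | h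
    · linarith
    · linarith

lemma decompLemma : ∀ (s : ℕ) {Y : Type u} [MetricSpace Y] (𝒢 : Set (Set Y)),
    𝒢.Finite → (∀ G ∈ 𝒢, IsOpen G) → ⋃₀ 𝒢 = Set.univ →
    (∀ y : Y, {G ∈ 𝒢 | y ∈ G}.ncard ≤ s) →
    ∃ 𝒟 : ℕ → Set (Set Y),
      (∀ j, (∀ S ∈ 𝒟 j, IsOpen S) ∧ (𝒟 j).Pairwise Disjoint ∧
        (∀ S ∈ 𝒟 j, ∃ G ∈ 𝒢, S ⊆ G)) ∧
      (∀ j, s ≤ j → 𝒟 j = ∅) ∧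
      ⋃₀ (⋃ j, 𝒟 j) = Set.univ := by
  intro s
  induction s with
  | zero =>
    intro Y _ 𝒢 hfin hop hcov hord
    have hempty : ∀ y : Y, False := by
      intro y
      have hy : y ∈ ⋃₀ 𝒢 := by rw [hcov]; trivial
      obtain ⟨G, hG, hyG⟩ := hy
      have h1 : 0 < {G' ∈ 𝒢 | y ∈ G'}.ncard := by
        rw [Set.ncard_pos (hfin.subset (Set.sep_subset _ _))]
        exact ⟨G, hG, hyG⟩
      have h2 := hord y
      omega
    refine ⟨fun _ => ∅, by simp, by simp, ?_⟩
    ext y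
    exact (hempty y).elim
  | succ s ih =>
    intro Y _ 𝒢 hfin hop hcov hord
    classical
    haveI := hfin.to_subtype
    obtain ⟨v, hvcov, hvopen, hvcl⟩ :=
      exists_subset_iUnion_closure_subset (X := Y) (ι := ↥𝒢) (u := fun G => (G : Set Y))
        isClosed_univ (fun G => hop G G.2) (fun x _ => Set.toFinite _)
        (by rw [← Set.sUnion_eq_iUnion, hcov])
    set F : Set Y → Set Y := fun G => if h : G ∈ 𝒢 then closure (v ⟨G, h⟩) else ∅ with hF
    have hFclosed : ∀ G, IsClosed (F G) := by
      intro G; simp only [hF]; split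
      · exact isClosed_closure
      · exact isClosed_empty
    have hFsub : ∀ G (h : G ∈ 𝒢), F G ⊆ G := by
      intro G h
      simp only [hF, dif_pos h]
      exact hvcl ⟨G, h⟩
    have hFcov : ∀ y : Y, ∃ G, ∃ _ : G ∈ 𝒢, y ∈ F G := by
      intro y
      have hy : y ∈ ⋃ i, v i := hvcov (Set.mem_univ y)
      obtain ⟨i, hi⟩ := Set.mem_iUnion.1 hy
      refine ⟨(i : Set Y), i.2, ?_⟩
      simp only [hF, dif_pos i.2]
      exact subset_closure (by rwa [Subtype.coe_eta])
    set ℱ : Finset (Set Y) := hfin.toFinset with hℱdef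
    have hℱ : ∀ {G}, G ∈ ℱ ↔ G ∈ 𝒢 := fun {G} => hfin.mem_toFinset
    set E : Finset (Set Y) → Set Y := fun B => (⋂ G ∈ B, G) \ (⋃ G ∈ ℱ \ B, F G) with hE
    have hEopen : ∀ B : Finset (Set Y), B ⊆ ℱ → IsOpen (E B) := by
      intro B hB
      refine IsOpen.sdiff (isOpen_biInter_finset fun G hG => hop G (hℱ.1 (hB hG))) ?_
      exact isClosed_biUnion_finset fun G _ => hFclosed G
    have hmemE : ∀ (B : Finset (Set Y)) (y : Y),
        y ∈ E B ↔ (∀ G ∈ B, y ∈ G) ∧ ∀ G ∈ ℱ, G ∉ B → y ∉ F G := by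
      intro B y
      simp only [hE, Set.mem_diff, Set.mem_iInter, Set.mem_iUnion, Finset.mem_sdiff, not_exists]
      constructor
      · rintro ⟨h1, h2⟩
        refine ⟨h1, fun G hG hGB hyF => ?_⟩
        exact h2 G ⟨hG, hGB⟩ hyF
      · rintro ⟨h1, h2⟩
        refine ⟨h1, fun G => ?_⟩
        rintro ⟨hGF, hGB⟩ hyF
        exact h2 G hGF hGB hyF
    set 𝒯 : Set (Set Y) := E '' {B : Finset (Set Y) | B ⊆ ℱ ∧ B.card = s + 1} with h𝒯
    have htopen : ∀ S ∈ 𝒯, IsOpen S := by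
      rintro _ ⟨B, ⟨hB, _⟩, rfl⟩; exact hEopen B hB
    have hrefine𝒯 : ∀ S ∈ 𝒯, ∃ G ∈ 𝒢, S ⊆ G := by
      rintro _ ⟨B, ⟨hB, hBcard⟩, rfl⟩
      obtain ⟨G, hG⟩ := Finset.card_pos.1 (by omega : 0 < B.card)
      refine ⟨G, hℱ.1 (hB hG), ?_⟩
      intro y hy
      exact ((hmemE B y).1 hy).1 G hG
    have hdisjkey : ∀ B₁ B₂ : Finset (Set Y), B₁ ⊆ ℱ → B₂ ⊆ ℱ →
        B₁.card = s + 1 → B₂.card = s + 1 → B₁ ≠ B₂ →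
        ∀ y, y ∈ E B₁ → y ∈ E B₂ → False := by
      intro B₁ B₂ h₁ h₂ hc₁ hc₂ hne y hy₁ hy₂
      have hsub : ↑(B₁ ∪ B₂) ⊆ {G ∈ 𝒢 | y ∈ G} := by
        intro G hG
        rcases Finset.mem_union.1 hG with h | h
        · exact ⟨hℱ.1 (h₁ h), ((hmemE B₁ y).1 hy₁).1 G h⟩
        · exact ⟨hℱ.1 (h₂ h), ((hmemE B₂ y).1 hy₂).1 G h⟩
      have hnsub : ¬ B₂ ⊆ B₁ := by
        intro hss
        exact hne (Finset.eq_of_subset_of_card_le hss (by omega)).symm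
      obtain ⟨G₀, hG₀2, hG₀1⟩ := Finset.not_subset.1 hnsub
      have hins : insert G₀ B₁ ⊆ B₁ ∪ B₂ := by
        intro G hG
        rcases Finset.mem_insert.1 hG with rfl | h
        · exact Finset.mem_union_right _ hG₀2
        · exact Finset.mem_union_left _ h
      have hcard : s + 2 ≤ (B₁ ∪ B₂).card := by
        have hc := Finset.card_le_card hins
        rw [Finset.card_insert_of_notMem hG₀1] at hc
        omega
      have hle : (B₁ ∪ B₂).card ≤ {G ∈ 𝒢 | y ∈ G}.ncard := by
        rw [← Set.ncard_coe_finset]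
        exact Set.ncard_le_ncard hsub (hfin.subset (Set.sep_subset _ _))
      have := hord y
      omega
    have htdisj : 𝒯.Pairwise Disjoint := by
      rintro _ ⟨B₁, ⟨hB₁, hc₁⟩, rfl⟩ _ ⟨B₂, ⟨hB₂, hc₂⟩, rfl⟩ hne
      have hBne : B₁ ≠ B₂ := by rintro rfl; exact hne rfl
      rw [Set.disjoint_left]
      intro y hy₁ hy₂
      exact hdisjkey B₁ B₂ hB₁ hB₂ hc₁ hc₂ hBne y hy₁ hy₂
    set P := (⋃₀ 𝒯)ᶜ with hPdef
    have hPorder : ∀ y ∈ P, {G ∈ 𝒢 | y ∈ G}.ncard ≤ s := by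
      intro y hy
      by_contra hgt
      push_neg at hgt
      set Sy : Finset (Set Y) := ℱ.filter (fun G => y ∈ G) with hSy
      have hSyeq : {G ∈ 𝒢 | y ∈ G} = ↑Sy := by
        ext G
        simp only [hSy, Finset.coe_filter, Set.mem_setOf_eq, Set.mem_sep_iff]
        exact and_congr_left fun _ => hℱ.symm
      have hSycard : Sy.card = s + 1 := by
        have h1 := hord y
        rw [hSyeq, Set.ncard_coe_finset] at h1 hgt
        omega
      have hyE : y ∈ E Sy := by
        rw [hmemE]
        constructor
        · intro G hG; exact (Finset.mem_filter.1 hG).2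
        · intro G hGF hGB hyF
          exact hGB (Finset.mem_filter.2 ⟨hGF, hFsub G (hℱ.1 hGF) hyF⟩)
      exact hy ⟨E Sy, ⟨Sy, ⟨Finset.filter_subset _ _, hSycard⟩, rfl⟩, hyE⟩
    have hPclosed : IsClosed P := (isOpen_sUnion htopen).isClosed_compl
    set 𝒢' : Set (Set ↥P) := (fun G => (Subtype.val ⁻¹' G : Set ↥P)) '' 𝒢 with h𝒢'
    have h1 : 𝒢'.Finite := hfin.image _
    have h2 : ∀ H ∈ 𝒢', IsOpen H := by
      rintro _ ⟨G, hG, rfl⟩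
      exact (hop G hG).preimage continuous_subtype_val
    have h3 : ⋃₀ 𝒢' = Set.univ := by
      ext y
      simp only [Set.mem_univ, iff_true]
      have hy : (y : Y) ∈ ⋃₀ 𝒢 := by rw [hcov]; trivial
      obtain ⟨G, hG, hyG⟩ := hy
      exact ⟨_, ⟨G, hG, rfl⟩, hyG⟩
    have h4 : ∀ y : ↥P, {H ∈ 𝒢' | y ∈ H}.ncard ≤ s := by
      intro y
      have hsub : {H ∈ 𝒢' | y ∈ H} ⊆
          (fun G => (Subtype.val ⁻¹' G : Set ↥P)) '' {G ∈ 𝒢 | (y : Y) ∈ G} := by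
        rintro H ⟨⟨G, hG, rfl⟩, hyH⟩
        exact ⟨G, ⟨hG, hyH⟩, rfl⟩
      have hfin' : ({G ∈ 𝒢 | (y : Y) ∈ G}).Finite := hfin.subset (Set.sep_subset _ _)
      calc {H ∈ 𝒢' | y ∈ H}.ncard
          ≤ ((fun G => (Subtype.val ⁻¹' G : Set ↥P)) '' {G ∈ 𝒢 | (y : Y) ∈ G}).ncard :=
            Set.ncard_le_ncard hsub (hfin'.image _)
        _ ≤ {G ∈ 𝒢 | (y : Y) ∈ G}.ncard := Set.ncard_image_le hfin'
        _ ≤ s := hPorder y.1 y.2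
    obtain ⟨𝒟', h𝒟'props, h𝒟'bound, h𝒟'cov⟩ := ih 𝒢' h1 h2 h3 h4
    have hlift : ∀ j, ∃ ℒ : Set (Set Y), (∀ S ∈ ℒ, IsOpen S) ∧ ℒ.Pairwise Disjoint ∧
        (∀ S ∈ ℒ, ∃ G ∈ 𝒢, S ⊆ G) ∧ (∀ y : ↥P, y ∈ ⋃₀ (𝒟' j) → (y : Y) ∈ ⋃₀ ℒ) := by
      intro j
      obtain ⟨hop', hdisj', href'⟩ := h𝒟'props j
      obtain ⟨L, hLopen, hLsub, hLdisj⟩ := lemE P (𝒟' j) hop' hdisj'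
      have hch : ∀ S, S ∈ 𝒟' j → ∃ G, G ∈ 𝒢 ∧ S ⊆ (Subtype.val ⁻¹' G : Set ↥P) := by
        intro S hS
        obtain ⟨H, hH, hSH⟩ := href' S hS
        obtain ⟨G, hG, rfl⟩ := hH
        exact ⟨G, hG, hSH⟩
      choose g hg1 hg2 using hch
      refine ⟨{Q | ∃ S, ∃ h : S ∈ 𝒟' j, Q = L S ∩ g S h}, ?_, ?_, ?_, ?_⟩
      · rintro Q ⟨S, h, rfl⟩
        exact (hLopen S h).inter (hop _ (hg1 S h))
      · rintro Q₁ ⟨S₁, h₁, rfl⟩ Q₂ ⟨S₂, h₂, rfl⟩ hne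
        have hSne : S₁ ≠ S₂ := by rintro rfl; exact hne rfl
        exact (hLdisj S₁ h₁ S₂ h₂ hSne).mono Set.inter_subset_left Set.inter_subset_left
      · rintro Q ⟨S, h, rfl⟩
        exact ⟨g S h, hg1 S h, Set.inter_subset_right⟩
      · rintro y ⟨S, hS, hyS⟩
        exact ⟨L S ∩ g S hS, ⟨S, hS, rfl⟩, hLsub S hS ⟨y, hyS, rfl⟩, hg2 S hS hyS⟩
    choose ℒ hℒopen hℒdisj hℒref hℒcov using hlift
    refine ⟨fun j => if j < s then ℒ j else if j = s then 𝒯 else ∅, ?_, ?_, ?_⟩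
    · intro j
      by_cases h : j < s
      · simp only [if_pos h]
        exact ⟨hℒopen j, hℒdisj j, hℒref j⟩
      · by_cases h' : j = s
        · simp only [if_neg h, if_pos h']
          exact ⟨htopen, htdisj, hrefine𝒯⟩
        · simp only [if_neg h, if_neg h']
          exact ⟨by simp, by simp [Set.pairwise_empty], by simp⟩
    · intro j hj
      have hx1 : ¬ j < s := by omega
      have hx2 : ¬ j = s := by omega
      simp [hx1, hx2]
    · ext y
      simp only [Set.mem_univ, iff_true]
      by_cases hy : y ∈ ⋃₀ 𝒯
      · obtain ⟨S, hS, hyS⟩ := hy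
        refine Set.mem_sUnion.2 ⟨S, Set.mem_iUnion.2 ⟨s, ?_⟩, hyS⟩
        simp only [lt_irrefl, if_false, if_pos rfl]
        exact hS
      · have hyP : y ∈ P := hy
        have hy' : (⟨y, hyP⟩ : ↥P) ∈ ⋃₀ (⋃ j, 𝒟' j) := by rw [h𝒟'cov]; trivial
        obtain ⟨S, hSmem, hy'S⟩ := hy'
        obtain ⟨j, hSj⟩ := Set.mem_iUnion.1 hSmem
        have hjlt : j < s := by
          by_contra hge
          have := h𝒟'bound j (by omega)
          rw [this] at hSj
          exact hSj
        have hyL : (y : Y) ∈ ⋃₀ ℒ j := hℒcov j ⟨y, hyP⟩ ⟨S, hSj, hy'S⟩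
        obtain ⟨Q, hQ, hyQ⟩ := hyL
        refine Set.mem_sUnion.2 ⟨Q, Set.mem_iUnion.2 ⟨j, ?_⟩, hyQ⟩
        simp only [if_pos hjlt]
        exact hQ

lemma findimPart {X : Type u} [MetricSpace X] [SecondCountableTopology X]
    (Z : Set X) (hZc : IsClosed Z) (s₀ : ℕ)
    (hFCD : ∀ 𝒞 : Set (Set ↥Z), 𝒞.Finite → (∀ S ∈ 𝒞, IsOpen S) → ⋃₀ 𝒞 = Set.univ →
      ∃ 𝒱 : Set (Set ↥Z), 𝒱.Finite ∧ (∀ S ∈ 𝒱, IsOpen S) ∧ (∀ S ∈ 𝒱, ∃ T ∈ 𝒞, S ⊆ T) ∧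
        ⋃₀ 𝒱 = Set.univ ∧ ∀ y : ↥Z, {S ∈ 𝒱 | y ∈ S}.ncard ≤ s₀ + 1)
    (𝒰 : ℕ → Set (Set X)) (h𝒰o : ∀ l, ∀ S ∈ 𝒰 l, IsOpen S)
    (h𝒰c : ∀ l, ⋃₀ 𝒰 l = Set.univ) :
    ∃ W : ℕ → Set (Set X),
      (∀ l, (∀ S ∈ W l, IsOpen S) ∧ (W l).Pairwise Disjoint ∧ ∀ S ∈ W l, ∃ T ∈ 𝒰 l, S ⊆ T) ∧
      Z ⊆ ⋃₀ (⋃ l, W l) := by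
  classical
  rcases isEmpty_or_nonempty X with hX | hX
  · exact ⟨fun _ => ∅, fun l => ⟨by simp, by simp [Set.pairwise_empty], by simp⟩,
      fun x _ => (hX.false x).elim⟩
  set κ₀ := s₀ + 1 with hκ₀
  set κ := 2 * κ₀ with hκ
  have hκ₀pos : 0 < κ₀ := by omega
  -- countable common refinement
  set 𝒜fam : Set (Set X) := {A | ∃ f : Fin κ → Set X,
      (∀ l : Fin κ, f l ∈ 𝒰 (l : ℕ)) ∧ A = ⋂ l, f l} with h𝒜fam
  have h𝒜open : ∀ A ∈ 𝒜fam, IsOpen A := by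
    rintro A ⟨f, hf, rfl⟩
    exact isOpen_iInter_of_finite fun l => h𝒰o l _ (hf l)
  have h𝒜cov : ⋃₀ 𝒜fam = Set.univ := by
    ext x; simp only [Set.mem_univ, iff_true]
    have hx : ∀ l : Fin κ, ∃ T ∈ 𝒰 (l : ℕ), x ∈ T := by
      intro l
      have h1 : x ∈ ⋃₀ 𝒰 (l : ℕ) := by rw [h𝒰c]; trivial
      exact h1
    choose f hf1 hf2 using hx
    exact ⟨⋂ l, f l, ⟨f, hf1, rfl⟩, Set.mem_iInter.2 hf2⟩
  obtain ⟨Tsub, hTcnt, hTsub, hTcov⟩ := TopologicalSpace.isOpen_sUnion_countable 𝒜fam h𝒜open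
  have hTne : Tsub.Nonempty := by
    rcases Set.eq_empty_or_nonempty Tsub with rfl | h
    · exfalso
      obtain ⟨x⟩ := hX
      have h1 : x ∈ ⋃₀ 𝒜fam := by rw [h𝒜cov]; trivial
      rw [← hTcov] at h1
      simp at h1
    · exact h
  obtain ⟨A, hAeq⟩ := hTcnt.exists_eq_range hTne
  have hAmem : ∀ t, A t ∈ 𝒜fam := fun t => hTsub (hAeq ▸ Set.mem_range_self t)
  have hAcov : (⋃ t, A t) = Set.univ := by
    rw [← Set.sUnion_range, ← hAeq, hTcov, h𝒜cov]
  have hAopen : ∀ t, IsOpen (A t) := fun t => h𝒜open _ (hAmem t)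
  choose pick hpick1 hpick2 using hAmem
  have hApick : ∀ t (l : Fin κ), A t ⊆ pick t l := by
    intro t l
    rw [hpick2 t]
    exact Set.iInter_subset _ l
  -- partial unions
  set Wp : ℕ → Set X := fun r => ⋃ t ∈ Set.Iic r, A t with hWp
  have hWpopen : ∀ r, IsOpen (Wp r) := fun r => isOpen_biUnion fun t _ => hAopen t
  have hWpmono : ∀ r r', r ≤ r' → Wp r ⊆ Wp r' := by
    intro r r' h
    exact Set.biUnion_subset_biUnion_left (fun t ht => le_trans ht h)
  -- closed exhaustion of Z
  set L : ℕ → Set X := fun r => {x | x ∈ Z ∧ ∀ z ∈ (Wp r)ᶜ, 1 / (r + 1 : ℝ) ≤ dist x z} with hL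
  have hLclosed : ∀ r, IsClosed (L r) := by
    intro r
    have heq : L r = Z ∩ ⋂ z ∈ (Wp r)ᶜ, {x | 1 / (r + 1 : ℝ) ≤ dist x z} := by
      ext x
      simp only [hL, Set.mem_setOf_eq, Set.mem_inter_iff, Set.mem_iInter]
    rw [heq]
    exact hZc.inter (isClosed_biInter fun z _ =>
      isClosed_le continuous_const (continuous_id.dist continuous_const))
  have hrpos : ∀ r : ℕ, (0 : ℝ) < 1 / (r + 1 : ℝ) := by
    intro r; positivity
  have hLsubW : ∀ r, L r ⊆ Wp r := by
    intro r x hx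
    by_contra hxn
    have h1 := hx.2 x hxn
    rw [dist_self] at h1
    exact absurd h1 (not_le.2 (hrpos r))
  have hLexh : ∀ x ∈ Z, ∃ r, x ∈ L r := by
    intro x hx
    have h1 : x ∈ ⋃ t, A t := by rw [hAcov]; trivial
    obtain ⟨t₀, ht₀⟩ := Set.mem_iUnion.1 h1
    obtain ⟨ε, hε, hball⟩ := Metric.isOpen_iff.1 (hAopen t₀) x ht₀
    obtain ⟨n, hn⟩ := exists_nat_one_div_lt hε
    refine ⟨max n t₀, hx, fun z hz => ?_⟩
    have hzA : z ∉ A t₀ := by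
      intro hzA
      exact hz (Set.mem_biUnion (Set.mem_Iic.2 (le_max_right n t₀)) hzA)
    have hzb : ¬ dist z x < ε := fun hlt => hzA (hball hlt)
    push_neg at hzb
    rw [dist_comm] at hzb
    have h2 : 1 / ((max n t₀ : ℕ) + 1 : ℝ) ≤ 1 / (n + 1 : ℝ) := by
      apply one_div_le_one_div_of_le
      · positivity
      · have : (n : ℝ) ≤ (max n t₀ : ℕ) := Nat.cast_le.2 (le_max_left n t₀)
        linarith
    linarith
  -- the open exhaustion N
  have hstep : ∀ (r : ℕ) (p : Set X), ∃ q : Set X, IsOpen q ∧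
      ((IsClosed p ∧ p ∪ L r ⊆ Wp r) → (p ∪ L r ⊆ q ∧ closure q ⊆ Wp r)) := by
    intro r p
    by_cases h : IsClosed p ∧ p ∪ L r ⊆ Wp r
    · obtain ⟨u, huo, hsu, hclu⟩ :=
        normal_exists_closure_subset (h.1.union (hLclosed r)) (hWpopen r) h.2
      exact ⟨u, huo, fun _ => ⟨hsu, hclu⟩⟩
    · exact ⟨∅, isOpen_empty, fun hh => absurd hh h⟩
  choose nxt hnxtOpen hnxtProp using hstep
  set N : ℕ → Set X := fun r =>
    Nat.rec (nxt 0 ∅) (fun r' p => nxt (r' + 1) (closure p)) r with hN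
  have hNsucc : ∀ r, N (r + 1) = nxt (r + 1) (closure (N r)) := fun r => rfl
  have hN0 : N 0 = nxt 0 ∅ := rfl
  have hNopen : ∀ r, IsOpen (N r) := by
    intro r
    cases r with
    | zero => rw [hN0]; exact hnxtOpen 0 ∅
    | succ r' => rw [hNsucc]; exact hnxtOpen _ _
  have hNkey : ∀ r, L r ⊆ N r ∧ closure (N r) ⊆ Wp r ∧
      (∀ r', r = r' + 1 → closure (N r') ⊆ N r) := by
    intro r
    induction r with
    | zero =>
      have h := hnxtProp 0 ∅ ⟨isClosed_empty, by
        rw [Set.empty_union]; exact hLsubW 0⟩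
      rw [hN0]
      exact ⟨(Set.union_subset_iff.1 h.1).2, h.2, fun r' hr' => by omega⟩
    | succ r ihr =>
      have hpre : IsClosed (closure (N r)) ∧ closure (N r) ∪ L (r + 1) ⊆ Wp (r + 1) :=
        ⟨isClosed_closure,
          Set.union_subset (ihr.2.1.trans (hWpmono r (r + 1) (by omega))) (hLsubW (r + 1))⟩
      have h := hnxtProp (r + 1) (closure (N r)) hpre
      rw [hNsucc]
      refine ⟨(Set.union_subset_iff.1 h.1).2, h.2, fun r' hr' => ?_⟩
      have : r' = r := by omega
      subst this
      exact (Set.union_subset_iff.1 h.1).1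
  have hNclsucc : ∀ r, closure (N r) ⊆ N (r + 1) := fun r => (hNkey (r + 1)).2.2 r rfl
  have hNle : ∀ r r', r ≤ r' → N r ⊆ N r' := by
    intro r r' h
    induction r' with
    | zero => have : r = 0 := by omega
              subst this; exact subset_rfl
    | succ r'' ih =>
      rcases Nat.lt_or_ge r (r'' + 1) with h1 | h1
      · exact (ih (by omega)).trans (subset_closure.trans (hNclsucc r''))
      · have : r = r'' + 1 := by omega
        subst this; exact subset_rfl
  have hZN : ∀ x ∈ Z, ∃ r, x ∈ N r := by
    intro x hx
    obtain ⟨r, hr⟩ := hLexh x hx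
    exact ⟨r, (hNkey r).1 hr⟩
  -- rings
  set prevN : ℕ → Set X := fun r => if r = 0 then ∅ else N (r - 1) with hprevN
  set Ring : ℕ → Set X := fun r => N (r + 1) \ closure (prevN r) with hRing
  have hRingOpen : ∀ r, IsOpen (Ring r) := fun r => (hNopen (r + 1)).sdiff isClosed_closure
  have hRingCov : ∀ x ∈ Z, ∃ r, x ∈ Ring r := by
    intro x hx
    have hex : ∃ r, x ∈ N r := hZN x hx
    set r1 := Nat.find hex with hr1def
    have hr1 : x ∈ N r1 := Nat.find_spec hex
    cases hr1c : r1 with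
    | zero =>
      refine ⟨0, ⟨hNle 0 1 (by omega) (by rw [← hr1c]; exact hr1), ?_⟩⟩
      simp [hRing, hprevN]
    | succ m =>
      refine ⟨m, ⟨?_, ?_⟩⟩
      · have : x ∈ N (m + 1) := by rw [← hr1c]; exact hr1
        exact hNle (m + 1) (m + 1) le_rfl this
      · simp only [hprevN]
        cases m with
        | zero => simp
        | succ m' =>
          simp only [Nat.succ_ne_zero, if_false]
          intro hmem
          have h1 : x ∈ N (m' + 1) := hNclsucc m' (by simpa using hmem)
          have h2 : m' + 1 < r1 := by omega
          exact Nat.find_min hex h2 h1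
  have hRingDisj : ∀ r r', r + 2 ≤ r' → Disjoint (Ring r) (Ring r') := by
    intro r r' h
    rw [Set.disjoint_left]
    intro x hx hx'
    have h1 : x ∈ N (r + 1) := hx.1
    have h2 : x ∈ prevN r' := by
      simp only [hprevN, if_neg (by omega : ¬ r' = 0)]
      exact hNle (r + 1) (r' - 1) (by omega) h1
    exact hx'.2 (subset_closure h2)
  have hclRingW : ∀ r, closure (Ring r) ⊆ Wp (r + 1) := by
    intro r
    exact (closure_mono Set.diff_subset).trans (hNkey (r + 1)).2.1
  -- subspace covers
  set Atil : ℕ → Set ↥Z := fun t => Subtype.val ⁻¹' (A t) with hAtil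
  set Bad : ℕ → Set ↥Z := fun r => Subtype.val ⁻¹' (closure (Ring r))ᶜ with hBad
  set 𝒞 : ℕ → Set (Set ↥Z) := fun r => insert (Bad r) (Atil '' Set.Iic (r + 1)) with h𝒞
  have h𝒞fin : ∀ r, (𝒞 r).Finite := fun r => (((Set.finite_Iic _).image _).insert _)
  have h𝒞open : ∀ r, ∀ S ∈ 𝒞 r, IsOpen S := by
    intro r S hS
    rcases hS with rfl | ⟨t, _, rfl⟩
    · exact (isClosed_closure.isOpen_compl).preimage continuous_subtype_val
    · exact (hAopen t).preimage continuous_subtype_val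
  have h𝒞cov : ∀ r, ⋃₀ 𝒞 r = Set.univ := by
    intro r; ext y
    simp only [Set.mem_univ, iff_true]
    by_cases hy : (y : X) ∈ closure (Ring r)
    · have h1 : (y : X) ∈ Wp (r + 1) := hclRingW r hy
      obtain ⟨t, ht, hyt⟩ := Set.mem_iUnion₂.1 h1
      exact ⟨Atil t, Set.mem_insert_of_mem _ ⟨t, ht, rfl⟩, hyt⟩
    · exact ⟨Bad r, Set.mem_insert _ _, hy⟩
  choose 𝒱 h𝒱fin h𝒱open h𝒱ref h𝒱cov h𝒱ord using fun r =>
    hFCD (𝒞 r) (h𝒞fin r) (h𝒞open r) (h𝒞cov r)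
  choose 𝒟 h𝒟props h𝒟bound h𝒟cov using fun r =>
    decompLemma κ₀ (𝒱 r) (h𝒱fin r) (h𝒱open r) (h𝒱cov r) (h𝒱ord r)
  -- trim and merge
  set RingZ : ℕ → Set ↥Z := fun r => Subtype.val ⁻¹' (Ring r) with hRingZ
  set 𝒟tr : ℕ → ℕ → Set (Set ↥Z) := fun r j =>
    {S' | ∃ S, ∃ _ : S ∈ 𝒟 r j, (∃ t, S ⊆ Atil t) ∧ S' = S ∩ RingZ r} with h𝒟tr
  set ℰ : ℕ → Set (Set ↥Z) := fun l => ⋃ (r : ℕ) (_ : r % 2 = l / κ₀), 𝒟tr r (l % κ₀) with hℰ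
  have hℰmem : ∀ l S', S' ∈ ℰ l ↔ ∃ r, r % 2 = l / κ₀ ∧ S' ∈ 𝒟tr r (l % κ₀) := by
    intro l S'
    simp only [hℰ, Set.mem_iUnion]
    tauto
  have hℰopen : ∀ l, ∀ S ∈ ℰ l, IsOpen S := by
    intro l S hS
    obtain ⟨r, _, S₀, hS₀, _, rfl⟩ := (hℰmem l S).1 hS
    exact ((h𝒟props r (l % κ₀)).1 S₀ hS₀).inter ((hRingOpen r).preimage continuous_subtype_val)
  have hℰdisj : ∀ l, (ℰ l).Pairwise Disjoint := by
    intro l S₁ hS₁ S₂ hS₂ hne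
    obtain ⟨r₁, hr₁, T₁, hT₁, _, rfl⟩ := (hℰmem l _).1 hS₁
    obtain ⟨r₂, hr₂, T₂, hT₂, _, rfl⟩ := (hℰmem l _).1 hS₂
    rcases eq_or_ne r₁ r₂ with rfl | hrne
    · have hTne : T₁ ≠ T₂ := by rintro rfl; exact hne rfl
      exact ((h𝒟props r₁ (l % κ₀)).2.1 hT₁ hT₂ hTne).mono
        Set.inter_subset_left Set.inter_subset_left
    · have hd : Disjoint (RingZ r₁) (RingZ r₂) := by
        rcases Nat.lt_or_ge r₁ r₂ with h | h
        · have : r₁ + 2 ≤ r₂ := by omega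
          exact (hRingDisj r₁ r₂ this).preimage _
        · have : r₂ + 2 ≤ r₁ := by omega
          exact ((hRingDisj r₂ r₁ this).preimage (Subtype.val : ↥Z → X)).symm
      exact hd.mono Set.inter_subset_right Set.inter_subset_right
  have hℰwit : ∀ l S', S' ∈ ℰ l → ∃ t, S' ⊆ Atil t := by
    intro l S' hS'
    obtain ⟨r, _, S₀, hS₀, ⟨t, ht⟩, rfl⟩ := (hℰmem l _).1 hS'
    exact ⟨t, Set.inter_subset_left.trans ht⟩
  have hℰcov : ∀ y : ↥Z, ∃ l, l < κ ∧ y ∈ ⋃₀ ℰ l := by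
    intro y
    obtain ⟨r, hr⟩ := hRingCov (y : X) y.2
    have hy1 : y ∈ ⋃₀ (⋃ j, 𝒟 r j) := by rw [h𝒟cov r]; trivial
    obtain ⟨S, hSmem, hyS⟩ := hy1
    obtain ⟨j, hSj⟩ := Set.mem_iUnion.1 hSmem
    have hjlt : j < κ₀ := by
      by_contra hge
      rw [h𝒟bound r j (by omega)] at hSj
      exact hSj
    obtain ⟨V, hV, hSV⟩ := (h𝒟props r j).2.2 S hSj
    obtain ⟨T, hT, hVT⟩ := h𝒱ref r V hV
    have hwit : ∃ t, S ⊆ Atil t := by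
      rcases hT with rfl | ⟨t, _, rfl⟩
      · exfalso
        have : (y : X) ∉ closure (Ring r) := hVT (hSV hyS)
        exact this (subset_closure hr)
      · exact ⟨t, hSV.trans hVT⟩
    have hlκ : r % 2 * κ₀ + j < κ := by
      have h2 : r % 2 ≤ 1 := Nat.le_of_lt_succ (Nat.mod_lt r (by omega))
      have h3 : r % 2 * κ₀ ≤ 1 * κ₀ := Nat.mul_le_mul_right κ₀ h2
      rw [one_mul] at h3
      omega
    refine ⟨r % 2 * κ₀ + j, hlκ, ?_⟩
    have hdiv : (r % 2 * κ₀ + j) / κ₀ = r % 2 := by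
      rw [Nat.add_comm, Nat.add_mul_div_right _ _ hκ₀pos, Nat.div_eq_of_lt hjlt, Nat.zero_add]
    have hmod : (r % 2 * κ₀ + j) % κ₀ = j := by
      rw [Nat.add_comm, Nat.add_mul_mod_self_right, Nat.mod_eq_of_lt hjlt]
    refine ⟨S ∩ RingZ r, ?_, ⟨hyS, hr⟩⟩
    rw [hℰmem]
    refine ⟨r, by rw [hdiv], ?_⟩
    rw [hmod]
    exact ⟨S, hSj, hwit, rfl⟩
  -- lift to X
  choose Ll hLl1 hLl2 hLl3 using fun l => lemE Z (ℰ l) (hℰopen l) (hℰdisj l)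
  choose tW htW using hℰwit
  set Wfam : ℕ → Set (Set X) := fun l =>
    if hl : l < κ then
      {Q | ∃ S, ∃ h : S ∈ ℰ l, Q = Ll l S ∩ A (tW l S h)}
    else ∅ with hWfam
  refine ⟨Wfam, ?_, ?_⟩
  · intro l
    by_cases hl : l < κ
    · simp only [hWfam, dif_pos hl]
      refine ⟨?_, ?_, ?_⟩
      · rintro Q ⟨S, h, rfl⟩
        exact (hLl1 l S h).inter (hAopen _)
      · rintro Q₁ ⟨S₁, h₁, rfl⟩ Q₂ ⟨S₂, h₂, rfl⟩ hne
        have hSne : S₁ ≠ S₂ := by rintro rfl; exact hne rfl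
        exact (hLl3 l S₁ h₁ S₂ h₂ hSne).mono Set.inter_subset_left Set.inter_subset_left
      · rintro Q ⟨S, h, rfl⟩
        refine ⟨pick (tW l S h) ⟨l, hl⟩, ?_, ?_⟩
        · exact hpick1 (tW l S h) ⟨l, hl⟩
        · exact Set.inter_subset_right.trans (hApick _ _)
    · simp only [hWfam, dif_neg hl]
      exact ⟨by simp, by simp [Set.pairwise_empty], by simp⟩
  · intro x hx
    obtain ⟨l, hl, hycov⟩ := hℰcov ⟨x, hx⟩
    obtain ⟨S, hS, hyS⟩ := hycov
    refine Set.mem_sUnion.2 ⟨Ll l S ∩ A (tW l S hS), Set.mem_iUnion.2 ⟨l, ?_⟩, ?_, ?_⟩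
    · simp only [hWfam, dif_pos hl]
      exact ⟨S, hS, rfl⟩
    · exact hLl2 l S hS ⟨⟨x, hx⟩, hyS, rfl⟩
    · exact htW l S hS hyS

lemma keyLemmaA {X : Type u} [TopologicalSpace X] (hSc : ScOFinO X)
    (𝒰 : ℕ → Set (Set X)) (h𝒰o : ∀ j, ∀ S ∈ 𝒰 j, IsOpen S)
    (M : Set X) (hM : IsClosed M)
    (𝓕 : ℕ → Set (Set X)) (h𝓕fin : ∀ j, (𝓕 j).Finite) (h𝓕sub : ∀ j, 𝓕 j ⊆ 𝒰 j)
    (h𝓕cov : ∀ j, M ⊆ ⋃₀ 𝓕 j) :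
    ∃ W : ℕ → Set (Set X),
      (∀ j, (∀ S ∈ W j, IsOpen S) ∧ (W j).Pairwise Disjoint ∧
        ∀ S ∈ W j, ∃ T ∈ 𝒰 j, S ⊆ T) ∧
      M ⊆ ⋃₀ (⋃ j, W j) := by
  classical
  set A : ℕ → Set (Set X) := fun j => insert Mᶜ (𝓕 j) with hA
  have hAcond : ∀ j, (A j).Finite ∧ (∀ S ∈ A j, IsOpen S) ∧ ⋃₀ A j = Set.univ := by
    intro j
    refine ⟨(h𝓕fin j).insert _, ?_, ?_⟩
    · intro S hS
      rcases hS with rfl | hS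
      · exact hM.isOpen_compl
      · exact h𝒰o j S (h𝓕sub j hS)
    · ext x
      simp only [Set.mem_univ, iff_true]
      by_cases hx : x ∈ M
      · obtain ⟨T, hT, hxT⟩ := h𝓕cov j hx
        exact ⟨T, Set.mem_insert_of_mem _ hT, hxT⟩
      · exact ⟨Mᶜ, Set.mem_insert _ _, hx⟩
  obtain ⟨V, hVprops, hVcov⟩ := hSc A hAcond
  refine ⟨fun j => {S ∈ V j | ∃ T ∈ 𝓕 j, S ⊆ T}, ?_, ?_⟩
  · intro j
    refine ⟨?_, ?_, ?_⟩
    · intro S hS; exact (hVprops j).1 S hS.1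
    · exact (hVprops j).2.1.mono (Set.sep_subset _ _)
    · rintro S ⟨_, T, hT, hST⟩
      exact ⟨T, h𝓕sub j hT, hST⟩
  · intro x hx
    have hx2 : x ∈ ⋃₀ (⋃ j, V j) := by rw [hVcov]; trivial
    obtain ⟨S, hSmem, hxS⟩ := hx2
    obtain ⟨j, hSj⟩ := Set.mem_iUnion.1 hSmem
    obtain ⟨T, hT, hST⟩ := (hVprops j).2.2 S hSj
    rcases hT with rfl | hT
    · exact absurd (hST hxS) (by simpa using hx)
    · exact ⟨S, Set.mem_iUnion.2 ⟨j, ⟨hSj, T, hT, hST⟩⟩, hxS⟩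


lemma hurewiczPart {X : Type u} [MetricSpace X] (C : Set X) (hHur : HurewiczProperty ↥C)
    (𝒰 : ℕ → Set (Set X)) (h𝒰o : ∀ n, ∀ S ∈ 𝒰 n, IsOpen S)
    (h𝒰c : ∀ n, ⋃₀ 𝒰 n = Set.univ) :
    ∃ M : ℕ → Set X, ∃ 𝓕 : ℕ → Set (Set X),
      (∀ N, IsClosed (M N)) ∧ (∀ x ∈ C, ∃ N, x ∈ M N) ∧
      (∀ n, (𝓕 n).Finite ∧ 𝓕 n ⊆ 𝒰 n) ∧
      (∀ N n, N ≤ n → M N ⊆ ⋃₀ 𝓕 n) := by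
  classical
  set Ustar : ℕ → Set (Set X) := fun n =>
    {B | IsOpen B ∧ ∃ T ∈ 𝒰 n, closure B ⊆ T} with hUstar
  have hUstarcov : ∀ n, ∀ x : X, ∃ B ∈ Ustar n, x ∈ B := by
    intro n x
    have hx : x ∈ ⋃₀ 𝒰 n := by rw [h𝒰c n]; trivial
    obtain ⟨T, hT, hxT⟩ := hx
    obtain ⟨ε, hε, hball⟩ := Metric.isOpen_iff.1 (h𝒰o n T hT) x hxT
    refine ⟨Metric.ball x (ε / 2), ⟨Metric.isOpen_ball, ⟨T, hT, ?_⟩⟩, ?_⟩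
    · refine (closure_ball_subset_closedBall).trans ?_
      refine (Metric.closedBall_subset_ball (by linarith)).trans hball
    · exact Metric.mem_ball_self (by linarith)
  set U' : ℕ → Set (Set ↥C) := fun n =>
    (fun B => (Subtype.val ⁻¹' B : Set ↥C)) '' (Ustar n) with hU'
  have hU'props : ∀ n, (∀ S ∈ U' n, IsOpen S) ∧ ⋃₀ U' n = Set.univ := by
    intro n
    constructor
    · rintro _ ⟨B, hB, rfl⟩
      exact hB.1.preimage continuous_subtype_val
    · ext y
      simp only [Set.mem_univ, iff_true]
      obtain ⟨B, hB, hyB⟩ := hUstarcov n (y : X)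
      exact ⟨_, ⟨B, hB, rfl⟩, hyB⟩
  obtain ⟨V', hV'fin, hγ⟩ := hHur U' hU'props
  have hw : ∀ n S, S ∈ V' n → ∃ B, B ∈ Ustar n ∧ S = (Subtype.val ⁻¹' B : Set ↥C) := by
    intro n S hS
    obtain ⟨B, hB, hBeq⟩ := (hV'fin n).2 hS
    exact ⟨B, hB, hBeq.symm⟩
  choose B hBmem hBeq using hw
  have hw2 : ∀ n S (h : S ∈ V' n), ∃ T ∈ 𝒰 n, closure (B n S h) ⊆ T :=
    fun n S h => (hBmem n S h).2
  choose T hTmem hTcl using hw2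
  set Bt : ℕ → Set ↥C → Set X := fun n S => if h : S ∈ V' n then B n S h else ∅ with hBt
  set Tt : ℕ → Set ↥C → Set X := fun n S => if h : S ∈ V' n then T n S h else ∅ with hTt
  set G : ℕ → Set X := fun n => ⋃ S ∈ V' n, Bt n S with hG
  set 𝓕 : ℕ → Set (Set X) := fun n => Tt n '' (V' n) with h𝓕
  have h𝓕fin : ∀ n, (𝓕 n).Finite := fun n => (hV'fin n).1.image _
  have h𝓕sub : ∀ n, 𝓕 n ⊆ 𝒰 n := by
    rintro n _ ⟨S, hS, rfl⟩
    simp only [hTt, dif_pos hS]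
    exact hTmem n S hS
  have hGcl : ∀ n, closure (G n) ⊆ ⋃₀ 𝓕 n := by
    intro n
    rw [hG]
    simp only
    rw [(hV'fin n).1.closure_biUnion]
    intro x hx
    obtain ⟨S, hS, hxS⟩ := Set.mem_iUnion₂.1 hx
    refine ⟨Tt n S, ⟨S, hS, rfl⟩, ?_⟩
    simp only [hBt, hTt, dif_pos hS] at hxS ⊢
    exact hTcl n S hS hxS
  set M : ℕ → Set X := fun N => ⋂ (n) (_ : N ≤ n), closure (G n) with hM
  refine ⟨M, 𝓕, ?_, ?_, fun n => ⟨h𝓕fin n, h𝓕sub n⟩, ?_⟩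
  · intro N
    exact isClosed_biInter fun n _ => isClosed_closure
  · intro x hx
    have hev := hγ ⟨x, hx⟩
    rw [Filter.eventually_atTop] at hev
    obtain ⟨N, hN⟩ := hev
    refine ⟨N, Set.mem_iInter₂.2 fun n hn => ?_⟩
    have hy : (⟨x, hx⟩ : ↥C) ∈ ⋃₀ V' n := hN n hn
    obtain ⟨S, hS, hyS⟩ := hy
    have hxB : x ∈ Bt n S := by
      simp only [hBt, dif_pos hS]
      have := hBeq n S hS
      rw [this] at hyS
      exact hyS
    exact subset_closure (Set.mem_biUnion hS hxB)
  · intro N n hn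
    refine Set.Subset.trans ?_ (hGcl n)
    intro x hx
    exact Set.mem_iInter₂.1 hx n hn

/-- Corollary: if a separable metrizable space `X` has an `F_σ` subset `C` such that `C` has
the Hurewicz property and `X \ U` is finite dimensional for every open `U ⊇ C`, then
`S_c(O,O)` and `S_c(O_fin,O)` are equivalent for `X`. -/
theorem scOO_iff_scOFinO_of_Fsigma_hurewicz_kernel
    {X : Type*} [TopologicalSpace X] [TopologicalSpace.MetrizableSpace X]
    [TopologicalSpace.SeparableSpace X] (C : Set X)
    (hFsigma : ∃ F : ℕ → Set X, (∀ n, IsClosed (F n)) ∧ C = ⋃ n, F n)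
    (hHur : HurewiczProperty ↥C)
    (hdim : ∀ U : Set X, IsOpen U → C ⊆ U → FiniteCoveringDimension ↥(Uᶜ)) :
    ScOO X ↔ ScOFinO X := by
  constructor
  · intro h U hU
    exact h U (fun n => ⟨(hU n).2.1, (hU n).2.2⟩)
  · intro hSc U hU
    classical
    letI : MetricSpace X := TopologicalSpace.metrizableSpaceMetric X
    haveI : SecondCountableTopology X := UniformSpace.secondCountable_of_separable X
    have hUo : ∀ n, ∀ S ∈ U n, IsOpen S := fun n => (hU n).1
    have hUc : ∀ n, ⋃₀ U n = Set.univ := fun n => (hU n).2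
    obtain ⟨M, 𝓕, hMcl, hCM, h𝓕, hMF⟩ :=
      hurewiczPart C hHur (fun n => U (2 * n)) (fun n => hUo (2 * n)) (fun n => hUc (2 * n))
    have hKL : ∀ N : ℕ, ∃ W : ℕ → Set (Set X),
        (∀ j, (∀ S ∈ W j, IsOpen S) ∧ (W j).Pairwise Disjoint ∧
          ∀ S ∈ W j, ∃ T ∈ U (2 * Nat.pair N j), S ⊆ T) ∧
        M N ⊆ ⋃₀ (⋃ j, W j) := by
      intro N
      exact keyLemmaA hSc (fun j => U (2 * Nat.pair N j)) (fun j => hUo _)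
        (M N) (hMcl N) (fun j => 𝓕 (Nat.pair N j)) (fun j => (h𝓕 _).1)
        (fun j => (h𝓕 _).2) (fun j => hMF N (Nat.pair N j) (Nat.left_le_pair N j))
    choose W hWprops hWcov using hKL
    set Veven : ℕ → Set (Set X) := fun n => W (Nat.unpair n).1 (Nat.unpair n).2 with hVeven
    set R : Set X := ⋃ n, ⋃₀ Veven n with hR
    have hRopen : IsOpen R :=
      isOpen_iUnion fun n => isOpen_sUnion fun S hS => (hWprops _ _).1 S hS
    have hCR : C ⊆ R := by
      intro x hx
      obtain ⟨N, hxM⟩ := hCM x hx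
      have hx2 : x ∈ ⋃₀ (⋃ j, W N j) := hWcov N hxM
      obtain ⟨S, hSmem, hxS⟩ := hx2
      obtain ⟨j, hSj⟩ := Set.mem_iUnion.1 hSmem
      refine Set.mem_iUnion.2 ⟨Nat.pair N j, ⟨S, ?_, hxS⟩⟩
      simp only [hVeven, Nat.unpair_pair]
      exact hSj
    obtain ⟨s₀, hFCD⟩ := hdim R hRopen hCR
    obtain ⟨Wodd, hWoddprops, hWoddcov⟩ :=
      findimPart Rᶜ hRopen.isClosed_compl s₀ hFCD (fun l => U (2 * l + 1))
        (fun l => hUo (2 * l + 1)) (fun l => hUc (2 * l + 1))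
    refine ⟨fun m => if m % 2 = 0 then Veven (m / 2) else Wodd (m / 2), ?_, ?_⟩
    · intro m
      by_cases hm : m % 2 = 0
      · simp only [if_pos hm]
        obtain ⟨h1, h2, h3⟩ := hWprops (Nat.unpair (m / 2)).1 (Nat.unpair (m / 2)).2
        refine ⟨h1, h2, ?_⟩
        intro S hS
        have h4 := h3 S hS
        rw [Nat.pair_unpair] at h4
        have hmm : 2 * (m / 2) = m := by omega
        rwa [hmm] at h4
      · simp only [if_neg hm]
        obtain ⟨h1, h2, h3⟩ := hWoddprops (m / 2)
        refine ⟨h1, h2, ?_⟩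
        intro S hS
        have h4 := h3 S hS
        have hmm : 2 * (m / 2) + 1 = m := by omega
        rwa [hmm] at h4
    · ext x
      simp only [Set.mem_univ, iff_true]
      by_cases hx : x ∈ R
      · obtain ⟨n, hn⟩ := Set.mem_iUnion.1 hx
        obtain ⟨S, hS, hxS⟩ := hn
        refine ⟨S, Set.mem_iUnion.2 ⟨2 * n, ?_⟩, hxS⟩
        have h0 : (2 * n) % 2 = 0 := by omega
        have h1 : 2 * n / 2 = n := by omega
        simp only [if_pos h0, h1]
        exact hS
      · have h2 : x ∈ ⋃₀ (⋃ l, Wodd l) := hWoddcov hx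
        obtain ⟨S, hS, hxS⟩ := h2
        obtain ⟨l, hSl⟩ := Set.mem_iUnion.1 hS
        refine ⟨S, Set.mem_iUnion.2 ⟨2 * l + 1, ?_⟩, hxS⟩
        have h0 : ¬ (2 * l + 1) % 2 = 0 := by omega
        have h1 : (2 * l + 1) / 2 = l := by omega
        simp only [if_neg h0, h1]
        exact hSl
end

section
/- If a topological space X has property S_c(O,O) and F ⊆ X is an F_σ subset of X, then F with the subspace topology has property S_c(O,O). -/
/-- Property `S_c(O,O)` is inherited by `F_σ` subsets. -/
theorem scOO_of_Fsigma {X : Type*} [TopologicalSpace X] (hX : ScOO X) (F : Set X)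
    (hF : ∃ C : ℕ → Set X, (∀ n, IsClosed (C n)) ∧ F = ⋃ n, C n) :
    ScOO ↥F := by
  classical
  obtain ⟨C, hCcl, hCF⟩ := hF
  intro U hU
  -- choose open extensions of members of the covers
  have hext : ∀ (m : ℕ) (S : Set ↥F), ∃ O : Set X, IsOpen O ∧
      (S ∈ U m → Subtype.val ⁻¹' O = S) := by
    intro m S
    by_cases h : S ∈ U m
    · obtain ⟨O, hO, hOeq⟩ := isOpen_induced_iff.mp ((hU m).1 S h)
      exact ⟨O, hO, fun _ => hOeq⟩
    · exact ⟨∅, isOpen_empty, fun h' => absurd h' h⟩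
  choose ext hextO hextEq using hext
  set e : ℕ × ℕ ≃ ℕ := Nat.pairEquiv with he
  -- For each k, a sequence of open covers of X
  set W : ℕ → ℕ → Set (Set X) := fun k n =>
    insert (C k)ᶜ ((fun S => ext (e (k, n)) S ∪ (C k)ᶜ) '' U (e (k, n))) with hWdef
  have hWcov : ∀ k n, (∀ B ∈ W k n, IsOpen B) ∧ ⋃₀ W k n = Set.univ := by
    intro k n
    constructor
    · rintro B (rfl | ⟨S, hS, rfl⟩)
      · exact (hCcl k).isOpen_compl
      · exact (hextO _ _).union (hCcl k).isOpen_compl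
    · apply Set.eq_univ_of_forall
      intro x
      by_cases hx : x ∈ C k
      · have hxF : x ∈ F := hCF ▸ Set.mem_iUnion.mpr ⟨k, hx⟩
        have hmem : (⟨x, hxF⟩ : ↥F) ∈ ⋃₀ U (e (k, n)) := by
          rw [(hU _).2]; trivial
        obtain ⟨S, hS, hxS⟩ := hmem
        refine ⟨ext (e (k, n)) S ∪ (C k)ᶜ, Set.mem_insert_of_mem _ ⟨S, hS, rfl⟩, Or.inl ?_⟩
        rw [← hextEq (e (k, n)) S hS] at hxS
        exact hxS
      · exact ⟨(C k)ᶜ, Set.mem_insert _ _, hx⟩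
  -- apply S_c(O,O) of X for each k
  have key : ∀ k, ∃ V : ℕ → Set (Set X),
      (∀ n, (∀ S ∈ V n, IsOpen S) ∧ (V n).Pairwise Disjoint ∧
        ∀ S ∈ V n, ∃ T ∈ W k n, S ⊆ T) ∧ ⋃₀ (⋃ n, V n) = Set.univ :=
    fun k => hX (W k) (hWcov k)
  choose V hV using key
  -- select, for each good T, a member of the original cover it refines (modulo (C k)ᶜ)
  have hsel : ∀ k n (T : Set X), ∃ S : Set ↥F,
      T ∈ V k n → ¬ T ⊆ (C k)ᶜ →
        S ∈ U (e (k, n)) ∧ T ⊆ ext (e (k, n)) S ∪ (C k)ᶜ := by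
    intro k n T
    by_cases hT : T ∈ V k n ∧ ¬ T ⊆ (C k)ᶜ
    · obtain ⟨B, hB, hTB⟩ := (hV k).1 n |>.2.2 T hT.1
      rcases hB with rfl | ⟨S, hS, rfl⟩
      · exact absurd hTB hT.2
      · exact ⟨S, fun _ _ => ⟨hS, hTB⟩⟩
    · exact ⟨∅, fun h1 h2 => absurd ⟨h1, h2⟩ hT⟩
  choose sel hsel using hsel
  -- the resulting disjoint families on F
  refine ⟨fun m => (fun T => Subtype.val ⁻¹'
      (T ∩ ext m (sel (e.symm m).1 (e.symm m).2 T))) ''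
      {T ∈ V (e.symm m).1 (e.symm m).2 | ¬ T ⊆ (C (e.symm m).1)ᶜ}, ?_, ?_⟩
  · intro m
    set k := (e.symm m).1 with hk
    set n := (e.symm m).2 with hn
    have hek : e (k, n) = m := by
      rw [hk, hn]
      exact e.apply_symm_apply m
    refine ⟨?_, ?_, ?_⟩
    · rintro A ⟨T, hT, rfl⟩
      exact continuous_subtype_val.isOpen_preimage _
        ((((hV k).1 n).1 T hT.1).inter (hextO _ _))
    · rintro a ⟨T, hT, rfl⟩ b ⟨T', hT', rfl⟩ hab
      have hTT : T ≠ T' := by rintro rfl; exact hab rfl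
      have hd : Disjoint T T' := ((hV k).1 n).2.1 hT.1 hT'.1 hTT
      exact (hd.preimage (Subtype.val : ↥F → X)).mono
        (Set.preimage_mono Set.inter_subset_left)
        (Set.preimage_mono Set.inter_subset_left)
    · rintro A ⟨T, hT, rfl⟩
      obtain ⟨hSU, -⟩ := hsel k n T hT.1 hT.2
      rw [hek] at hSU
      refine ⟨sel k n T, hSU, ?_⟩
      have heq := hextEq m (sel k n T) hSU
      rw [← heq]
      exact Set.preimage_mono Set.inter_subset_right
  · apply Set.eq_univ_of_forall
    rintro ⟨x, hxF⟩
    have hx : x ∈ ⋃ i, C i := hCF ▸ hxF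
    obtain ⟨k, hxk⟩ := Set.mem_iUnion.mp hx
    have hxV : x ∈ ⋃₀ (⋃ n, V k n) := by rw [(hV k).2]; trivial
    obtain ⟨T, hTmem, hxT⟩ := hxV
    obtain ⟨n, hTn⟩ := Set.mem_iUnion.mp hTmem
    have hnot : ¬ T ⊆ (C k)ᶜ := fun h => (h hxT) hxk
    obtain ⟨hSU, hTsub⟩ := hsel k n T hTn hnot
    have hxext : x ∈ ext (e (k, n)) (sel k n T) := by
      rcases hTsub hxT with h | h
      · exact h
      · exact absurd hxk h
    refine Set.mem_sUnion.mpr ⟨Subtype.val ⁻¹' (T ∩ ext (e (k, n)) (sel k n T)),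
      Set.mem_iUnion.mpr ⟨e (k, n), ?_⟩, ⟨hxT, hxext⟩⟩
    simp only [e.symm_apply_apply]
    exact ⟨T, ⟨hTn, hnot⟩, rfl⟩
end

section
/- If a topological space X has property S_c(O_fin,O) and F ⊆ X is an F_σ subset of X, then F with the subspace topology has property S_c(O_fin,O). -/
/-- Property `S_c(O_fin,O)` is inherited by `F_σ` subsets. -/
theorem scOFinO_of_Fsigma {X : Type*} [TopologicalSpace X] (hX : ScOFinO X) (F : Set X)
    (hF : ∃ C : ℕ → Set X, (∀ n, IsClosed (C n)) ∧ F = ⋃ n, C n) :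
    ScOFinO ↥F := by
  classical
  obtain ⟨C, hCcl, hFC⟩ := hF
  intro U hU
  -- extend members of `U n` to open sets of `X`
  have hext : ∀ n, ∀ T ∈ U n, ∃ O : Set X, IsOpen O ∧ ((↑) : F → X) ⁻¹' O = T := by
    intro n T hT
    exact isOpen_induced_iff.mp ((hU n).2.1 T hT)
  choose! e he1 he2 using hext
  -- the covers of X
  set W : ℕ → ℕ → Set (Set X) :=
    fun k m => (e (Nat.pair k m) '' U (Nat.pair k m)) ∪ {(C k)ᶜ} with hWdef
  have hW : ∀ k, ∀ m, (W k m).Finite ∧ (∀ S ∈ W k m, IsOpen S) ∧ ⋃₀ W k m = Set.univ := by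
    intro k m
    refine ⟨((hU _).1.image _).union (Set.finite_singleton _), ?_, ?_⟩
    · rintro S (⟨T, hT, rfl⟩ | rfl)
      · exact he1 _ T hT
      · exact (hCcl k).isOpen_compl
    · apply Set.eq_univ_iff_forall.mpr
      intro x
      by_cases hx : x ∈ C k
      · have hxF : x ∈ F := hFC ▸ Set.mem_iUnion.mpr ⟨k, hx⟩
        have : (⟨x, hxF⟩ : F) ∈ ⋃₀ U (Nat.pair k m) := by
          rw [(hU (Nat.pair k m)).2.2]; trivial
        obtain ⟨T, hT, hxT⟩ := this
        refine ⟨e (Nat.pair k m) T, Or.inl ⟨T, hT, rfl⟩, ?_⟩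
        rw [← he2 (Nat.pair k m) T hT] at hxT
        exact hxT
      · exact ⟨(C k)ᶜ, Or.inr rfl, hx⟩
  have h' : ∀ k, ∃ V : ℕ → Set (Set X),
      (∀ m, (∀ S ∈ V m, IsOpen S) ∧ (V m).Pairwise Disjoint ∧
        ∀ S ∈ V m, ∃ T ∈ W k m, S ⊆ T) ∧
      ⋃₀ (⋃ m, V m) = Set.univ := fun k => hX (W k) (hW k)
  choose V' hV1 hV2 using h'
  -- pull back to F
  refine ⟨fun n => (fun S => ((↑) : F → X) ⁻¹' S) ''
      {S ∈ V' n.unpair.1 n.unpair.2 | ∃ T ∈ U n, S ⊆ e n T}, ?_, ?_⟩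
  · intro n
    refine ⟨?_, ?_, ?_⟩
    · rintro s ⟨S, ⟨hS, _⟩, rfl⟩
      exact ((hV1 n.unpair.1 n.unpair.2).1 S hS).preimage continuous_subtype_val
    · rintro s ⟨S, ⟨hS, _⟩, rfl⟩ t ⟨S', ⟨hS', _⟩, rfl⟩ hne
      have : S ≠ S' := by rintro rfl; exact hne rfl
      exact Disjoint.preimage _ ((hV1 n.unpair.1 n.unpair.2).2.1 hS hS' this)
    · rintro s ⟨S, ⟨hS, T, hT, hST⟩, rfl⟩
      refine ⟨T, hT, ?_⟩
      intro x hx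
      rw [← he2 n T hT]
      exact hST hx
  · apply Set.eq_univ_iff_forall.mpr
    intro x
    have hxF : (x : X) ∈ ⋃ n, C n := by rw [← hFC]; exact x.2
    obtain ⟨k, hk⟩ := Set.mem_iUnion.mp hxF
    have : (x : X) ∈ ⋃₀ ⋃ m, V' k m := by rw [hV2 k]; trivial
    obtain ⟨S, hS, hxS⟩ := this
    obtain ⟨m, hSm⟩ := Set.mem_iUnion.mp hS
    obtain ⟨T', hT', hST'⟩ := (hV1 k m).2.2 S hSm
    rcases hT' with ⟨T, hT, rfl⟩ | rfl
    · refine Set.mem_sUnion.mpr ⟨((↑) : F → X) ⁻¹' S, Set.mem_iUnion.mpr ⟨Nat.pair k m, ?_⟩, hxS⟩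
      refine ⟨S, ⟨?_, T, ?_, ?_⟩, rfl⟩
      · simpa [Nat.unpair_pair] using hSm
      · simpa [Nat.unpair_pair] using hT
      · simpa [Nat.unpair_pair] using hST'
    · exact absurd hk (hST' hxS)
end

section
/- For a compact topological space X, properties S_c(O_fin,O) and S_c(O,O) are equivalent. -/
/-- For compact spaces, `S_c(O_fin,O)` and `S_c(O,O)` are equivalent. -/
theorem scOFinO_iff_scOO_of_compact {X : Type*} [TopologicalSpace X] [CompactSpace X] :
    ScOFinO X ↔ ScOO X := by
  constructor
  · intro h U hU
    -- extract finite subcovers by compactness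
    have hfin : ∀ n, ∃ F : Set (Set X), F ⊆ U n ∧ F.Finite ∧ ⋃₀ F = Set.univ := by
      intro n
      obtain ⟨hopen, hcov⟩ := hU n
      have hc : Set.univ ⊆ ⋃ (S : U n), (S : Set X) := by
        rw [Set.sUnion_eq_iUnion] at hcov
        rw [hcov]
      obtain ⟨t, ht⟩ := (isCompact_univ (X := X)).elim_finite_subcover
        (fun S : U n => (S : Set X)) (fun S => hopen S S.2) hc
      refine ⟨Subtype.val '' (t : Set (U n)), ?_, (t.finite_toSet).image _, ?_⟩
      · rintro _ ⟨S, _, rfl⟩; exact S.2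
      · apply Set.eq_univ_of_univ_subset
        intro x hx
        obtain ⟨S, hS, hxS⟩ := Set.mem_iUnion₂.mp (ht hx)
        exact ⟨S, ⟨S, hS, rfl⟩, hxS⟩
    choose F hFU hFfin hFcov using hfin
    obtain ⟨V, hV, hVcov⟩ := h F (fun n =>
      ⟨hFfin n, fun S hS => (hU n).1 S (hFU n hS), hFcov n⟩)
    refine ⟨V, fun n => ?_, hVcov⟩
    obtain ⟨h1, h2, h3⟩ := hV n
    exact ⟨h1, h2, fun S hS => by
      obtain ⟨T, hT, hST⟩ := h3 S hS
      exact ⟨T, hFU n hT, hST⟩⟩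
  · intro h U hU
    exact h U fun n => (hU n).2
end

section
/- The space of irrational numbers, i.e., ℝ\ℚ with the subspace topology inherited from ℝ, does not have the Hurewicz property. -/
open Set Filter Metric


/-- The space of irrational numbers does not have the Hurewicz property. -/
theorem not_hurewicz_irrational :
    ¬ HurewiczProperty ↥{x : ℝ | Irrational x} := by
  intro h
  classical
  set q : ℕ → ℝ := fun n => (((Denumerable.eqv ℚ).symm n : ℚ) : ℝ) with hq
  set U : ℕ → Set (Set ↥{x : ℝ | Irrational x}) :=
    fun n => {A | ∃ δ : ℝ, 0 < δ ∧ A = {x : ↥{x : ℝ | Irrational x} | δ < |(x : ℝ) - q n|}}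
    with hU
  have hUcov : ∀ n, (∀ S ∈ U n, IsOpen S) ∧ ⋃₀ U n = univ := by
    intro n
    constructor
    · rintro S ⟨δ, hδ, rfl⟩
      exact isOpen_lt continuous_const ((continuous_subtype_val.sub continuous_const).abs)
    · ext x
      simp only [mem_sUnion, mem_univ, iff_true]
      have hx : (x : ℝ) ≠ q n := (x.2 : Irrational (x : ℝ)).ne_rat _
      have hpos : 0 < |(x : ℝ) - q n| := abs_pos.2 (sub_ne_zero.2 hx)
      exact ⟨_, ⟨|(x : ℝ) - q n| / 2, half_pos hpos, rfl⟩, half_lt_self hpos⟩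
  obtain ⟨V, hV1, hV2⟩ := h U hUcov
  set g : ∀ _ : ℕ, Set ↥{x : ℝ | Irrational x} → ℝ :=
    fun n A => if h : A ∈ U n then h.choose else 1 with hg
  have hgspec : ∀ n A, A ∈ U n →
      0 < g n A ∧ A = {x : ↥{x : ℝ | Irrational x} | g n A < |(x : ℝ) - q n|} := by
    intro n A hA
    simp only [hg, dif_pos hA]
    exact hA.choose_spec
  set F : ℕ → Finset ℝ := fun n => ((hV1 n).1.toFinset.image (g n)) with hF
  set ε : ℕ → ℝ := fun n => if h : (F n).Nonempty then (F n).min' h else 1 with hε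
  have hεpos : ∀ n, 0 < ε n := by
    intro n
    simp only [hε]
    split_ifs with hne
    · obtain ⟨A, hA, hAeq⟩ := Finset.mem_image.1 ((F n).min'_mem hne)
      rw [← hAeq]
      exact (hgspec n A ((hV1 n).2 ((hV1 n).1.mem_toFinset.1 hA))).1
    · exact one_pos
  have hεle : ∀ n, ∀ A ∈ V n, ε n ≤ g n A := by
    intro n A hA
    have hmem : g n A ∈ F n := Finset.mem_image_of_mem _ ((hV1 n).1.mem_toFinset.2 hA)
    simp only [hε]
    rw [dif_pos ⟨_, hmem⟩]
    exact Finset.min'_le _ _ hmem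
  set O : ℕ → Set ℝ := fun K => ⋃ n ∈ Ici K, ball (q n) (ε n) with hO
  have hOopen : ∀ K, IsOpen (O K) := fun K => isOpen_biUnion fun _ _ => isOpen_ball
  have hOdense : ∀ K, Dense (O K) := by
    intro K
    rw [dense_iff_inter_open]
    rintro W hW ⟨x, hxW⟩
    obtain ⟨r, hr, hball⟩ := Metric.isOpen_iff.1 hW x hxW
    obtain ⟨a, hxa, har⟩ := exists_rat_btwn (show x < x + r by linarith)
    obtain ⟨b, hab, hbr⟩ := exists_rat_btwn har
    have hab' : a < b := by exact_mod_cast hab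
    have hba : (0 : ℚ) < b - a := sub_pos.2 hab'
    set f : ℕ → ℚ := fun k => a + (b - a) / (k + 2) with hf
    have hfinj : Function.Injective f := by
      have hanti : StrictAnti f := by
        intro i j hij
        have hi2 : (0 : ℚ) < (i : ℚ) + 2 := by positivity
        have hij' : (i : ℚ) + 2 < (j : ℚ) + 2 := by
          have : (i : ℚ) < j := by exact_mod_cast hij
          linarith
        have := div_lt_div_of_pos_left hba hi2 hij'
        simp only [hf]
        linarith
      exact hanti.injective
    have hfmem : ∀ k, (f k : ℝ) ∈ ball x r := by
      intro k
      have hk0 : (0 : ℚ) ≤ (k : ℚ) := Nat.cast_nonneg k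
      have h1 : (0 : ℚ) < (b - a) / (k + 2) := by positivity
      have h2 : (b - a) / (k + 2) < b - a := div_lt_self hba (by linarith)
      have hfk1 : a < f k := by simp only [hf]; linarith
      have hfk2 : f k < b := by simp only [hf]; linarith
      have hx1 : x < (f k : ℝ) := lt_trans hxa (by exact_mod_cast hfk1)
      have hx2 : (f k : ℝ) < x + r :=
        lt_trans (show (f k : ℝ) < (b : ℝ) by exact_mod_cast hfk2) hbr
      rw [mem_ball, Real.dist_eq, abs_sub_lt_iff]
      constructor <;> linarith
    set T : Set ℕ := {n | q n ∈ ball x r} with hT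
    have hTinf : T.Infinite :=
      infinite_of_injective_forall_mem
        (f := fun k => Denumerable.eqv ℚ (f k))
        ((Denumerable.eqv ℚ).injective.comp hfinj)
        (by
          intro k
          simp only [hT, mem_setOf_eq, hq, Equiv.symm_apply_apply]
          exact hfmem k)
    obtain ⟨n, hnT, hnK⟩ : ∃ n ∈ T, K ≤ n := by
      by_contra hcon
      push_neg at hcon
      exact hTinf (Set.Finite.subset (Set.finite_Iio K) fun n hn => hcon n hn)
    exact ⟨q n, hball hnT, mem_biUnion hnK (mem_ball_self (hεpos n))⟩
  have hGδ : IsGδ (⋂ K, O K) := IsGδ.iInter fun K => (hOopen K).isGδ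
  have hGdense : Dense (⋂ K, O K) := dense_iInter_of_isOpen hOopen hOdense
  obtain ⟨x, hxG, hxirr⟩ :=
    (Dense.inter_of_Gδ hGδ IsGδ.setOf_irrational hGdense dense_irrational).nonempty
  obtain ⟨K, hK⟩ := eventually_atTop.1 (hV2 ⟨x, hxirr⟩)
  obtain ⟨n, hnK, hxball⟩ := mem_iUnion₂.1 (mem_iInter.1 hxG K)
  obtain ⟨A, hAV, hxA⟩ := hK n hnK
  obtain ⟨hgpos, hAeq⟩ := hgspec n A ((hV1 n).2 hAV)
  rw [hAeq] at hxA
  have h1 : g n A < |x - q n| := hxA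
  have h2 : |x - q n| < ε n := by rwa [mem_ball, Real.dist_eq] at hxball
  linarith [hεle n A hAV]
end
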